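/- arXiv:1301.5584 — 2 statements merged into one kernel-verified Lean document; each statement's English description precedes it below -/
import Mathlib

section
/- Let f : V → ℝ be nonnegative with ‖f‖_w = 1, and let k ≥ 1 be an integer with 2k+1 ≤ n and λ_k > 0 (here λ_k is the k-th smallest eigenvalue of the normalized Laplacian). Then there exists a (2k+1)-step approximation g of f such that ‖f − g‖_w² ≤ 4·R(f)/λ_k. -/
open scoped Classical

namespace CheegerHigher

noncomputable section

variable {n : ℕ}

/-- Weighted degree of a vertex: `w(v) = ∑_u w(v,u)`. -/
def deg (w : Fin n → Fin n → ℝ) (v : Fin n) : ℝ := ∑ u, w v u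

/-- Volume of a vertex set. -/
def vol (w : Fin n → Fin n → ℝ) (S : Finset (Fin n)) : ℝ := ∑ v ∈ S, deg w v

/-- Total weight of (ordered) pairs from `S` to `T`; for disjoint `S`, `T` this is `w(E(S,T))`. -/
def cutWeight (w : Fin n → Fin n → ℝ) (S T : Finset (Fin n)) : ℝ :=
  ∑ u ∈ S, ∑ v ∈ T, w u v

/-- Total edge weight `w(E)` (each unordered edge counted once). -/
def totalWeight (w : Fin n → Fin n → ℝ) : ℝ := (1 / 2 : ℝ) * ∑ u, ∑ v, w u v

/-- Conductance of a set `S`. -/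
noncomputable def conductance (w : Fin n → Fin n → ℝ) (S : Finset (Fin n)) : ℝ :=
  cutWeight w S Sᶜ / min (vol w S) (vol w Sᶜ)

/-- Conductance of the graph: minimum over nonempty proper subsets. -/
noncomputable def minConductance (w : Fin n → Fin n → ℝ) : ℝ :=
  sInf { x | ∃ S : Finset (Fin n), S.Nonempty ∧ S ≠ Finset.univ ∧ x = conductance w S }

/-- `k`-way expansion: min over `k` pairwise disjoint nonempty subsets of the max conductance. -/
noncomputable def multiwayExpansion (w : Fin n → Fin n → ℝ) (k : ℕ) : ℝ :=
  sInf { x | ∃ S : Fin k → Finset (Fin n), (∀ i, (S i).Nonempty) ∧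
      (∀ i j, i ≠ j → Disjoint (S i) (S j)) ∧ x = ⨆ i, conductance w (S i) }

/-- `‖f‖_w²  = ∑_v w(v) f(v)²`. -/
def normWsq (w : Fin n → Fin n → ℝ) (f : Fin n → ℝ) : ℝ := ∑ v, deg w v * f v ^ 2

/-- Dirichlet energy `∑_{{u,v} ∈ E} w(u,v) (f(u)-f(v))²` (each unordered edge once). -/
def energy (w : Fin n → Fin n → ℝ) (f : Fin n → ℝ) : ℝ :=
  (1 / 2 : ℝ) * ∑ u, ∑ v, w u v * (f u - f v) ^ 2

/-- Rayleigh quotient of `f`. -/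
noncomputable def rayleigh (w : Fin n → Fin n → ℝ) (f : Fin n → ℝ) : ℝ :=
  energy w f / normWsq w f

/-- Signless energy `∑_{{u,v} ∈ E} w(u,v) (f(u)+f(v))²`. -/
def signEnergy (w : Fin n → Fin n → ℝ) (f : Fin n → ℝ) : ℝ :=
  (1 / 2 : ℝ) * ∑ u, ∑ v, w u v * (f u + f v) ^ 2

/-- Signless Rayleigh quotient `R⁺(f)`. -/
noncomputable def rayleighP (w : Fin n → Fin n → ℝ) (f : Fin n → ℝ) : ℝ :=
  signEnergy w f / normWsq w f

/-- Normalized Laplacian `𝓛 = I - D^{-1/2} A D^{-1/2}`. -/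
noncomputable def normLap (w : Fin n → Fin n → ℝ) : Matrix (Fin n) (Fin n) ℝ :=
  Matrix.of fun u v =>
    (if u = v then (1 : ℝ) else 0) - w u v / (Real.sqrt (deg w u) * Real.sqrt (deg w v))

/-- Signless normalized Laplacian `𝓜 = I + D^{-1/2} A D^{-1/2}`. -/
noncomputable def signLap (w : Fin n → Fin n → ℝ) : Matrix (Fin n) (Fin n) ℝ :=
  Matrix.of fun u v =>
    (if u = v then (1 : ℝ) else 0) + w u v / (Real.sqrt (deg w u) * Real.sqrt (deg w v))

/-- The `k`-th smallest eigenvalue of a Hermitian matrix (1-based index `k`). -/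
noncomputable def sortedEig {A : Matrix (Fin n) (Fin n) ℝ} (hA : A.IsHermitian) (k : ℕ) : ℝ :=
  if h : k - 1 < n then hA.eigenvalues (Tuple.sort hA.eigenvalues ⟨k - 1, h⟩) else 0

/-- Threshold set `V_f(t) = {v : f(v) ≥ t}`. -/
noncomputable def thresholdSet (f : Fin n → ℝ) (t : ℝ) : Finset (Fin n) :=
  Finset.univ.filter fun v => t ≤ f v

/-- `φ(f)`: best conductance among threshold sets of `f` that are nonempty and proper. -/
noncomputable def phiF (w : Fin n → Fin n → ℝ) (f : Fin n → ℝ) : ℝ :=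
  sInf { x | ∃ t : ℝ, (thresholdSet f t).Nonempty ∧ thresholdSet f t ≠ Finset.univ ∧
      x = conductance w (thresholdSet f t) }

/-- Support of a function, as a finset. -/
noncomputable def supp (f : Fin n → ℝ) : Finset (Fin n) :=
  Finset.univ.filter fun v => f v ≠ 0

/-- `L_f(t) = {v : f(v) ≤ -t}`. -/
noncomputable def Lset (f : Fin n → ℝ) (t : ℝ) : Finset (Fin n) :=
  Finset.univ.filter fun v => f v ≤ -t

/-- `R_f(t) = {v : f(v) ≥ t}`. -/
noncomputable def Rset (f : Fin n → ℝ) (t : ℝ) : Finset (Fin n) :=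
  Finset.univ.filter fun v => t ≤ f v

/-- Bipartiteness ratio of an induced cut `(L,R)` (for disjoint `L`, `R`). -/
noncomputable def biRatio (w : Fin n → Fin n → ℝ) (L R : Finset (Fin n)) : ℝ :=
  (cutWeight w L L + cutWeight w R R + cutWeight w (L ∪ R) (L ∪ R)ᶜ) / vol w (L ∪ R)

/-- `β(f)`: best bipartiteness ratio among threshold cuts of `f`. -/
noncomputable def betaF (w : Fin n → Fin n → ℝ) (f : Fin n → ℝ) : ℝ :=
  sInf { x | ∃ t : ℝ, 0 < t ∧ (Lset f t ∪ Rset f t).Nonempty ∧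
      x = biRatio w (Lset f t) (Rset f t) }

/-- `β(G)`: minimum bipartiteness ratio over all induced cuts. -/
noncomputable def minBeta (w : Fin n → Fin n → ℝ) : ℝ :=
  sInf { x | ∃ L R : Finset (Fin n), Disjoint L R ∧ (L ∪ R).Nonempty ∧ x = biRatio w L R }

/-- Energy of `f` restricted to the interval `(b,a]`:
`∑_{{u,v} ∈ E} w(u,v) · len((b,a] ∩ [f(u),f(v)])²`. -/
def intervalEnergy (w : Fin n → Fin n → ℝ) (f : Fin n → ℝ) (b a : ℝ) : ℝ :=
  (1 / 2 : ℝ) * ∑ u, ∑ v,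
    w u v * max 0 (min a (max (f u) (f v)) - max b (min (f u) (f v))) ^ 2

/-- The relative distance `dist(x,R) = inf_{y ∈ R} |x-y|/y` from a point to a region. -/
noncomputable def regionDist (x : ℝ) (R : Set ℝ) : ℝ :=
  sInf ((fun y => |x - y| / y) '' R)

/-- `g` is a `(2k+1)`-step approximation of `f`: there are thresholds
`0 = t₀ ≤ t₁ ≤ … ≤ t_{2k}` and `g(v)` is a threshold closest to `f(v)`. -/
def IsStepApprox (f g : Fin n → ℝ) (k : ℕ) : Prop :=
  ∃ t : Fin (2 * k + 1) → ℝ, t 0 = 0 ∧ Monotone t ∧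
    ∀ v, (∃ i, g v = t i) ∧ ∀ i, |f v - g v| ≤ |f v - t i|

/-- `g` is a symmetric `(2k+1)`-step approximation of `f`: there are thresholds
`0 = t₀ ≤ t₁ ≤ … ≤ t_{2k}` and `g(v)` is a value among `{±t_i}` closest to `f(v)`. -/
def IsSymStepApprox (f g : Fin n → ℝ) (k : ℕ) : Prop :=
  ∃ t : Fin (2 * k + 1) → ℝ, t 0 = 0 ∧ Monotone t ∧
    ∀ v, (∃ i, g v = t i ∨ g v = -t i) ∧
      ∀ i, |f v - g v| ≤ |f v - t i| ∧ |f v - g v| ≤ |f v + t i|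

/-- Edge weights of the induced subgraph on `U`. -/
def inducedW (w : Fin n → Fin n → ℝ) (U : Finset (Fin n)) : Fin n → Fin n → ℝ :=
  fun u v => if u ∈ U ∧ v ∈ U then w u v else 0

/-- Uncutness `γ(L,R) = w(E(L)) + w(E(R)) + w(E(L∪R, complement))`. -/
noncomputable def uncut (w : Fin n → Fin n → ℝ) (L R : Finset (Fin n)) : ℝ :=
  (1 / 2 : ℝ) * cutWeight w L L + (1 / 2 : ℝ) * cutWeight w R R +
    cutWeight w (L ∪ R) (L ∪ R)ᶜ

/-! ### Auxiliary lemmas for Statement 11 -/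

section Aux

open Finset
open scoped RealInnerProductSpace

lemma esum_apply {ι : Type*} (s : Finset ι) (F : ι → EuclideanSpace ℝ (Fin n)) (v : Fin n) :
    (∑ i ∈ s, F i) v = ∑ i ∈ s, F i v := by
  rw [WithLp.ofLp_sum]; exact Finset.sum_apply v s _

/-- Courant–Fischer upper bound. -/
theorem cf_upper {A : Matrix (Fin n) (Fin n) ℝ} (hA : A.IsHermitian)
    {k : ℕ} (hk1 : 1 ≤ k) (hkn : k ≤ n) {ι : Type*} [Fintype ι] (hcard : Fintype.card ι = k)
    (x : ι → EuclideanSpace ℝ (Fin n)) (hx : LinearIndependent ℝ x) {μ : ℝ}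
    (hμ : ∀ y : EuclideanSpace ℝ (Fin n), y ∈ Submodule.span ℝ (Set.range x) →
      ∑ u, ∑ v, y u * A u v * y v ≤ μ * ∑ v, (y v)^2) :
    sortedEig hA k ≤ μ := by
  classical
  have hkn' : k - 1 < n := by omega
  set σ := Tuple.sort hA.eigenvalues with hσ
  set ν : Fin n → ℝ := hA.eigenvalues ∘ σ with hν
  have hνmono : Monotone ν := Tuple.monotone_sort _
  set B : OrthonormalBasis (Fin n) ℝ (EuclideanSpace ℝ (Fin n)) :=
    hA.eigenvectorBasis.reindex σ.symm with hB
  have hBj : ∀ j, B j = hA.eigenvectorBasis (σ j) := by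
    intro j; simp [hB]
  have heig : ∀ j v, (∑ u, A v u * B j u) = ν j * B j v := by
    intro j v
    have h := hA.mulVec_eigenvectorBasis (σ j)
    have h2 := congrFun h v
    rw [← hBj] at h2
    simpa [Matrix.mulVec, dotProduct, hν] using h2
  have horth : ∀ i j, (∑ u, B i u * B j u) = if i = j then (1:ℝ) else 0 := by
    intro i j
    have h := (orthonormal_iff_ite (𝕜 := ℝ)).1 B.orthonormal i j
    rw [← h]
    simp [PiLp.inner_apply, RCLike.inner_apply]
    exact Finset.sum_congr rfl fun _ _ => mul_comm _ _
  have hrepr : ∀ (y : EuclideanSpace ℝ (Fin n)) (v : Fin n),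
      y v = ∑ j, (∑ u, B j u * y u) * B j v := by
    intro y v
    have h2 : ∑ j, B.repr y j * B j v = y v := by
      calc ∑ j, B.repr y j * B j v = (∑ j, B.repr y j • B j) v := by
            rw [esum_apply]
            exact Finset.sum_congr rfl fun i _ => rfl
        _ = y v := by rw [B.sum_repr]
    rw [← h2]
    apply Finset.sum_congr rfl
    intro j _
    congr 1
    rw [B.repr_apply_apply]
    simp [PiLp.inner_apply, RCLike.inner_apply]
    exact Finset.sum_congr rfl fun _ _ => mul_comm _ _
  have keyQ : ∀ (y : EuclideanSpace ℝ (Fin n)),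
      ∑ u, ∑ v, y u * A u v * y v = ∑ j, ν j * (∑ u, B j u * y u)^2 := by
    intro y
    set c : Fin n → ℝ := fun j => ∑ u, B j u * y u with hc
    have hmul : ∀ v, (∑ u, A v u * y u) = ∑ j, c j * (ν j * B j v) := by
      intro v
      calc ∑ u, A v u * y u = ∑ u, ∑ j, c j * (A v u * B j u) := by
            apply Finset.sum_congr rfl; intro u _
            rw [hrepr y u, Finset.mul_sum]
            apply Finset.sum_congr rfl; intro j _; ring
        _ = ∑ j, ∑ u, c j * (A v u * B j u) := Finset.sum_comm
        _ = ∑ j, c j * (ν j * B j v) := by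
            apply Finset.sum_congr rfl; intro j _
            rw [← Finset.mul_sum, heig]
    calc ∑ u, ∑ v, y u * A u v * y v = ∑ u, y u * ∑ v, A u v * y v := by
          apply Finset.sum_congr rfl; intro u _
          rw [Finset.mul_sum]
          apply Finset.sum_congr rfl; intro v _; ring
      _ = ∑ u, ∑ j, (ν j * c j) * (B j u * y u) := by
          apply Finset.sum_congr rfl; intro u _
          rw [hmul u, Finset.mul_sum]
          apply Finset.sum_congr rfl; intro j _; ring
      _ = ∑ j, ∑ u, (ν j * c j) * (B j u * y u) := Finset.sum_comm
      _ = ∑ j, ν j * c j ^ 2 := by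
          apply Finset.sum_congr rfl; intro j _
          rw [← Finset.mul_sum]
          change ν j * c j * c j = ν j * c j ^ 2; ring
  have keyN : ∀ (y : EuclideanSpace ℝ (Fin n)),
      ∑ v, (y v)^2 = ∑ j, (∑ u, B j u * y u)^2 := by
    intro y
    set c : Fin n → ℝ := fun j => ∑ u, B j u * y u with hc
    calc ∑ v, (y v)^2 = ∑ v, ∑ j, c j * (B j v * y v) := by
          apply Finset.sum_congr rfl; intro v _
          rw [pow_two, hrepr y v, Finset.sum_mul]
          apply Finset.sum_congr rfl; intro j _; ring
      _ = ∑ j, ∑ v, c j * (B j v * y v) := Finset.sum_comm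
      _ = ∑ j, c j ^ 2 := by
          apply Finset.sum_congr rfl; intro j _
          rw [← Finset.mul_sum]
          change c j * c j = c j ^ 2; ring
  set κ : Fin n := ⟨k - 1, hkn'⟩ with hκ
  set T : Submodule ℝ (EuclideanSpace ℝ (Fin n)) :=
    Submodule.span ℝ (Set.range (fun j : {j : Fin n // κ ≤ j} => B j.1)) with hT
  have hliT : LinearIndependent ℝ (fun j : {j : Fin n // κ ≤ j} => B j.1) :=
    B.orthonormal.linearIndependent.comp Subtype.val Subtype.val_injective
  have hTrank : Module.finrank ℝ T = n - (k - 1) := by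
    rw [hT, finrank_span_eq_card hliT, Fintype.card_subtype]
    have h : Finset.filter (fun j => κ ≤ j) Finset.univ = Finset.Ici κ := by
      ext j; simp
    rw [h, Fin.card_Ici]
  set S : Submodule ℝ (EuclideanSpace ℝ (Fin n)) := Submodule.span ℝ (Set.range x) with hS
  have hSrank : Module.finrank ℝ S = k := by
    rw [hS, finrank_span_eq_card hx, hcard]
  have hne : S ⊓ T ≠ ⊥ := by
    have hd := Submodule.finrank_sup_add_finrank_inf_eq S T
    have h1 : Module.finrank ℝ ↥(S ⊔ T) ≤ n := by
      refine le_trans (Submodule.finrank_le _) ?_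
      rw [finrank_euclideanSpace, Fintype.card_fin]
    intro hbot
    rw [hbot, finrank_bot, hSrank, hTrank] at hd
    omega
  obtain ⟨y, hy, hyne⟩ := Submodule.exists_mem_ne_zero_of_ne_bot hne
  have hyS : y ∈ S := hy.1
  have hyT : y ∈ T := hy.2
  have hcj : ∀ j : Fin n, j < κ → (∑ u, B j u * y u) = 0 := by
    intro j hj
    refine Submodule.span_induction ?_ ?_ ?_ ?_ hyT
    · rintro z ⟨j', rfl⟩
      rw [horth]
      have : j ≠ j'.1 := by
        intro h; rw [h] at hj; exact absurd j'.2 (not_le.2 hj)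
      simp [this]
    · simp
    · intro z z' _ _ h1 h2
      have : ∀ u, (z + z') u = z u + z' u := fun _ => rfl
      simp only [this, mul_add, Finset.sum_add_distrib, h1, h2, add_zero]
    · intro a z _ h1
      have : ∀ u, (a • z) u = a * z u := fun _ => rfl
      simp only [this]
      rw [show (∑ u, B j u * (a * z u)) = a * ∑ u, B j u * z u by
        rw [Finset.mul_sum]; apply Finset.sum_congr rfl; intro u _; ring, h1, mul_zero]
  have hNpos : (0:ℝ) < ∑ v, (y v)^2 := by
    have hex : ∃ v, y v ≠ 0 := by
      by_contra h
      push_neg at h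
      exact hyne (by ext u; simpa using h u)
    obtain ⟨v, hv⟩ := hex
    apply Finset.sum_pos' (fun i _ => sq_nonneg _)
    exact ⟨v, Finset.mem_univ v, by positivity⟩
  have hlow : ν κ * ∑ v, (y v)^2 ≤ ∑ u, ∑ v, y u * A u v * y v := by
    rw [keyQ y, keyN y, Finset.mul_sum]
    apply Finset.sum_le_sum
    intro j _
    rcases lt_or_ge j κ with hj | hj
    · rw [hcj j hj]; simp
    · exact mul_le_mul_of_nonneg_right (hνmono hj) (sq_nonneg _)
  have hup := hμ y hyS
  have hfin : ν κ ≤ μ := le_of_mul_le_mul_right (le_trans hlow hup) hNpos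
  rw [sortedEig, dif_pos hkn']
  exact hfin

/-- tent function -/
def tentf (a b z : ℝ) : ℝ := max 0 (min (z - a) (b - z))

lemma tentf_nonneg (a b z : ℝ) : 0 ≤ tentf a b z := le_max_left _ _

lemma tentf_eq_zero_left {a b z : ℝ} (h : z ≤ a) : tentf a b z = 0 :=
  max_eq_left (le_trans (min_le_left _ _) (by linarith))

lemma tentf_eq_zero_right {a b z : ℝ} (h : b ≤ z) : tentf a b z = 0 :=
  max_eq_left (le_trans (min_le_right _ _) (by linarith))

lemma tentf_support {a b z : ℝ} (h : tentf a b z ≠ 0) : a < z ∧ z < b := by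
  constructor
  · by_contra hc; push_neg at hc; exact h (tentf_eq_zero_left hc)
  · by_contra hc; push_neg at hc; exact h (tentf_eq_zero_right hc)

lemma tent_diff_le {a b x y : ℝ} (hab : a ≤ b) (hxy : x ≤ y) :
    |tentf a b x - tentf a b y| ≤ max x (min y b) - max x (min y a) := by
  rw [abs_sub_le_iff]
  unfold tentf
  constructor <;>
    (simp only [min_def, max_def] <;> split_ifs <;> linarith)

lemma tent_sq_sum (t : ℕ → ℝ) (ht : Monotone t) (N : ℕ) (x y : ℝ) (hxy : x ≤ y) :
    ∑ j ∈ range N, (tentf (t j) (t (j + 1)) x - tentf (t j) (t (j + 1)) y) ^ 2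
      ≤ (x - y) ^ 2 := by
  set m : ℕ → ℝ := fun j => max x (min y (t j)) with hm
  have hd : ∀ j, |tentf (t j) (t (j+1)) x - tentf (t j) (t (j+1)) y| ≤ m (j+1) - m j :=
    fun j => tent_diff_le (ht (Nat.le_succ j)) hxy
  have habs : ∑ j ∈ range N, |tentf (t j) (t (j + 1)) x - tentf (t j) (t (j + 1)) y| ≤ y - x := by
    calc ∑ j ∈ range N, |tentf (t j) (t (j + 1)) x - tentf (t j) (t (j + 1)) y|
        ≤ ∑ j ∈ range N, (m (j+1) - m j) := Finset.sum_le_sum fun j _ => hd j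
      _ = m N - m 0 := Finset.sum_range_sub m N
      _ ≤ y - x := by
          have h1 : m N ≤ y := max_le hxy (min_le_left _ _)
          have h2 : x ≤ m 0 := le_max_left _ _
          linarith
  calc ∑ j ∈ range N, (tentf (t j) (t (j + 1)) x - tentf (t j) (t (j + 1)) y) ^ 2
      = ∑ j ∈ range N, |tentf (t j) (t (j + 1)) x - tentf (t j) (t (j + 1)) y| ^ 2 := by
        apply Finset.sum_congr rfl; intro j _; rw [sq_abs]
    _ ≤ (∑ j ∈ range N, |tentf (t j) (t (j + 1)) x - tentf (t j) (t (j + 1)) y|) ^ 2 :=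
        Finset.sum_sq_le_sq_sum_of_nonneg fun j _ => abs_nonneg _
    _ ≤ (x - y) ^ 2 := by
        rw [show (x-y)^2 = (y-x)^2 by ring]
        apply pow_le_pow_left₀ (Finset.sum_nonneg fun j _ => abs_nonneg _) habs

lemma tent_sq_sum' (t : ℕ → ℝ) (ht : Monotone t) (N : ℕ) (x y : ℝ) :
    ∑ j ∈ range N, (tentf (t j) (t (j + 1)) x - tentf (t j) (t (j + 1)) y) ^ 2
      ≤ (x - y) ^ 2 := by
  rcases le_total x y with h | h
  · exact tent_sq_sum t ht N x y h
  · calc ∑ j ∈ range N, (tentf (t j) (t (j + 1)) x - tentf (t j) (t (j + 1)) y) ^ 2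
        = ∑ j ∈ range N, (tentf (t j) (t (j + 1)) y - tentf (t j) (t (j + 1)) x) ^ 2 := by
          apply Finset.sum_congr rfl; intro j _; ring
      _ ≤ (y - x) ^ 2 := tent_sq_sum t ht N y x h
      _ = (x - y) ^ 2 := by ring

lemma sq_sum_support_one {ι : Type*} [DecidableEq ι] (s : Finset ι) (a : ι → ℝ) (p : ι)
    (h : ∀ i ∈ s, a i ≠ 0 → i = p) : (∑ i ∈ s, a i) ^ 2 = ∑ i ∈ s, (a i) ^ 2 := by
  classical
  have h1 : ∑ i ∈ s.filter (fun i => i = p), a i = ∑ i ∈ s, a i :=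
    Finset.sum_filter_of_ne h
  have h2 : ∑ i ∈ s.filter (fun i => i = p), (a i) ^ 2 = ∑ i ∈ s, (a i) ^ 2 :=
    Finset.sum_filter_of_ne (fun i hi hne => h i hi (by
      intro h0; exact hne (by rw [h0]; ring)))
  have hsub : s.filter (fun i => i = p) ⊆ {p} := by
    intro i hi; simp only [Finset.mem_filter] at hi; simp [hi.2]
  rcases Finset.subset_singleton_iff.1 hsub with he | he
  · rw [← h1, ← h2, he]; simp
  · rw [← h1, ← h2, he]; simp

lemma sq_sum_support_two {ι : Type*} [DecidableEq ι] (s : Finset ι) (a : ι → ℝ) (p q : ι)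
    (h : ∀ i ∈ s, a i ≠ 0 → i = p ∨ i = q) :
    (∑ i ∈ s, a i) ^ 2 ≤ 2 * ∑ i ∈ s, (a i) ^ 2 := by
  classical
  have h1 : ∑ i ∈ s.filter (fun i => i = p ∨ i = q), a i = ∑ i ∈ s, a i :=
    Finset.sum_filter_of_ne h
  have hsub : s.filter (fun i => i = p ∨ i = q) ⊆ {p, q} := by
    intro i hi; simp only [Finset.mem_filter] at hi
    simp [hi.2]
  have hcard : (s.filter (fun i => i = p ∨ i = q)).card ≤ 2 := by
    refine le_trans (Finset.card_le_card hsub) ?_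
    exact le_trans (Finset.card_insert_le _ _) (by simp)
  calc (∑ i ∈ s, a i) ^ 2 = (∑ i ∈ s.filter (fun i => i = p ∨ i = q), a i) ^ 2 := by rw [h1]
    _ ≤ (s.filter (fun i => i = p ∨ i = q)).card * ∑ i ∈ s.filter (fun i => i = p ∨ i = q), (a i)^2 :=
        sq_sum_le_card_mul_sum_sq
    _ ≤ 2 * ∑ i ∈ s, (a i) ^ 2 := by
        apply mul_le_mul
        · exact_mod_cast hcard
        · exact Finset.sum_le_sum_of_subset_of_nonneg (Finset.filter_subset _ _)
            (fun i _ _ => sq_nonneg _)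
        · exact Finset.sum_nonneg fun i _ => sq_nonneg _
        · norm_num

lemma energy_nonneg (w : Fin n → Fin n → ℝ) (hnn : ∀ u v, 0 ≤ w u v) (f : Fin n → ℝ) :
    0 ≤ energy w f := by
  apply mul_nonneg (by norm_num)
  exact Finset.sum_nonneg fun u _ => Finset.sum_nonneg fun v _ =>
    mul_nonneg (hnn u v) (sq_nonneg _)

lemma col_sum (w : Fin n → Fin n → ℝ) (hsym : ∀ u v, w u v = w v u) (v : Fin n) :
    ∑ u, w u v = deg w v := by
  rw [deg]; apply Finset.sum_congr rfl; intro u _; rw [hsym]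

lemma energy_eq (w : Fin n → Fin n → ℝ) (hsym : ∀ u v, w u v = w v u) (g : Fin n → ℝ) :
    energy w g = ∑ v, deg w v * g v ^ 2 - ∑ u, ∑ v, w u v * (g u * g v) := by
  have expand : ∀ u v : Fin n, w u v * (g u - g v) ^ 2
      = w u v * g u ^ 2 + w u v * g v ^ 2 - 2 * (w u v * (g u * g v)) := by
    intro u v; ring
  have h1 : ∑ u, ∑ v, w u v * (g u : ℝ) ^ 2 = ∑ u, deg w u * g u ^ 2 := by
    apply Finset.sum_congr rfl; intro u _
    rw [deg, Finset.sum_mul]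
  have h2 : ∑ u, ∑ v, w u v * (g v : ℝ) ^ 2 = ∑ v, deg w v * g v ^ 2 := by
    rw [Finset.sum_comm]
    apply Finset.sum_congr rfl; intro v _
    rw [← col_sum w hsym v, Finset.sum_mul]
  rw [energy]
  simp only [expand, Finset.sum_sub_distrib, Finset.sum_add_distrib]
  rw [h1, h2]
  have h3 : ∑ u, ∑ v, 2 * (w u v * (g u * g v)) = 2 * ∑ u, ∑ v, w u v * (g u * g v) := by
    rw [Finset.mul_sum]
    apply Finset.sum_congr rfl; intro u _
    rw [Finset.mul_sum]
  rw [h3]; ring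

lemma sqrt_deg_pos (w : Fin n → Fin n → ℝ) (hdeg : ∀ v, 1 ≤ deg w v) (v : Fin n) :
    0 < Real.sqrt (deg w v) := Real.sqrt_pos.2 (lt_of_lt_of_le one_pos (hdeg v))

lemma norm_form_eq (w : Fin n → Fin n → ℝ) (hdeg : ∀ v, 1 ≤ deg w v) (g : Fin n → ℝ) :
    ∑ v, (Real.sqrt (deg w v) * g v) ^ 2 = normWsq w g := by
  rw [normWsq]
  apply Finset.sum_congr rfl; intro v _
  rw [mul_pow, Real.sq_sqrt (le_trans zero_le_one (hdeg v))]

lemma quad_form_eq (w : Fin n → Fin n → ℝ) (hsym : ∀ u v, w u v = w v u)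
    (hdeg : ∀ v, 1 ≤ deg w v) (g : Fin n → ℝ) :
    ∑ u, ∑ v, (Real.sqrt (deg w u) * g u) * normLap w u v * (Real.sqrt (deg w v) * g v)
      = energy w g := by
  rw [energy_eq w hsym g]
  have key : ∀ u v : Fin n,
      (Real.sqrt (deg w u) * g u) * normLap w u v * (Real.sqrt (deg w v) * g v)
      = (if u = v then (Real.sqrt (deg w u) * g u) * (Real.sqrt (deg w v) * g v) else 0)
        - w u v * (g u * g v) := by
    intro u v
    rw [normLap]
    have hu := sqrt_deg_pos w hdeg u
    have hv := sqrt_deg_pos w hdeg v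
    simp only [Matrix.of_apply]
    rw [mul_sub, sub_mul]
    congr 1
    · split_ifs <;> ring
    · field_simp
  simp only [key, Finset.sum_sub_distrib]
  congr 1
  apply Finset.sum_congr rfl; intro u _
  rw [Finset.sum_ite_eq univ u (fun v => (Real.sqrt (deg w u) * g u) * (Real.sqrt (deg w v) * g v))]
  simp only [Finset.mem_univ, if_true]
  rw [show Real.sqrt (deg w u) * g u * (Real.sqrt (deg w u) * g u)
      = (Real.sqrt (deg w u) * Real.sqrt (deg w u)) * g u ^ 2 by ring,
    Real.mul_self_sqrt (le_trans zero_le_one (hdeg u))]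

lemma exists_support_index {ι : Type*} (s : Finset ι) (hs : s.Nonempty) (h : ι → Fin n → ℝ)
    (hdisj : ∀ v : Fin n, ∀ i ∈ s, ∀ j ∈ s, i ≠ j → h i v = 0 ∨ h j v = 0) (v : Fin n) :
    ∃ p ∈ s, ∀ i ∈ s, h i v ≠ 0 → i = p := by
  classical
  by_cases hP : ∃ i ∈ s, h i v ≠ 0
  · obtain ⟨p, hp, hpne⟩ := hP
    refine ⟨p, hp, fun i hi hine => ?_⟩
    by_contra hne
    rcases hdisj v i hi p hp hne with h0 | h0
    · exact hine h0
    · exact hpne h0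
  · push_neg at hP
    exact ⟨hs.choose, hs.choose_spec, fun i hi hine => absurd (hP i hi) hine⟩

lemma normWsq_combination (w : Fin n → Fin n → ℝ)
    {ι : Type*} [DecidableEq ι] (s : Finset ι) (c : ι → ℝ) (h : ι → Fin n → ℝ)
    (hdisj : ∀ v : Fin n, ∀ i ∈ s, ∀ j ∈ s, i ≠ j → h i v = 0 ∨ h j v = 0) :
    normWsq w (fun v => ∑ i ∈ s, c i * h i v) = ∑ i ∈ s, (c i) ^ 2 * normWsq w (h i) := by
  classical
  rcases s.eq_empty_or_nonempty with rfl | hs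
  · simp [normWsq]
  rw [normWsq]
  have key : ∀ v : Fin n, (∑ i ∈ s, c i * h i v) ^ 2 = ∑ i ∈ s, (c i * h i v) ^ 2 := by
    intro v
    obtain ⟨p, hp, hsupp⟩ := exists_support_index s hs h hdisj v
    exact sq_sum_support_one s _ p (fun i hi hne => hsupp i hi (fun h0 => hne (by rw [h0, mul_zero])))
  calc ∑ v, deg w v * (∑ i ∈ s, c i * h i v) ^ 2
      = ∑ v, ∑ i ∈ s, (c i) ^ 2 * (deg w v * h i v ^ 2) := by
        apply Finset.sum_congr rfl; intro v _
        rw [key v, Finset.mul_sum]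
        apply Finset.sum_congr rfl; intro i _; ring
    _ = ∑ i ∈ s, ∑ v, (c i) ^ 2 * (deg w v * h i v ^ 2) := Finset.sum_comm
    _ = ∑ i ∈ s, (c i) ^ 2 * normWsq w (h i) := by
        apply Finset.sum_congr rfl; intro i _
        rw [normWsq, Finset.mul_sum]

lemma energy_combination (w : Fin n → Fin n → ℝ) (hnn : ∀ u v, 0 ≤ w u v)
    {ι : Type*} [DecidableEq ι] (s : Finset ι) (hs : s.Nonempty) (c : ι → ℝ) (h : ι → Fin n → ℝ)
    (hdisj : ∀ v : Fin n, ∀ i ∈ s, ∀ j ∈ s, i ≠ j → h i v = 0 ∨ h j v = 0) :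
    energy w (fun v => ∑ i ∈ s, c i * h i v) ≤ 2 * ∑ i ∈ s, (c i) ^ 2 * energy w (h i) := by
  classical
  have key : ∀ u v : Fin n,
      (∑ i ∈ s, c i * h i u - ∑ i ∈ s, c i * h i v) ^ 2
        ≤ 2 * ∑ i ∈ s, (c i) ^ 2 * (h i u - h i v) ^ 2 := by
    intro u v
    obtain ⟨p, hp, hsuppu⟩ := exists_support_index s hs h hdisj u
    obtain ⟨q, hq, hsuppv⟩ := exists_support_index s hs h hdisj v
    have h1 : (∑ i ∈ s, (c i * h i u - c i * h i v)) ^ 2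
        ≤ 2 * ∑ i ∈ s, (c i * h i u - c i * h i v) ^ 2 := by
      apply sq_sum_support_two s _ p q
      intro i hi hne
      by_contra hcon
      push_neg at hcon
      have hu0 : h i u = 0 := by
        by_contra h0; exact hcon.1 (hsuppu i hi h0)
      have hv0 : h i v = 0 := by
        by_contra h0; exact hcon.2 (hsuppv i hi h0)
      rw [hu0, hv0] at hne; simp at hne
    calc (∑ i ∈ s, c i * h i u - ∑ i ∈ s, c i * h i v) ^ 2
        = (∑ i ∈ s, (c i * h i u - c i * h i v)) ^ 2 := by rw [Finset.sum_sub_distrib]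
      _ ≤ 2 * ∑ i ∈ s, (c i * h i u - c i * h i v) ^ 2 := h1
      _ = 2 * ∑ i ∈ s, (c i) ^ 2 * (h i u - h i v) ^ 2 := by
          congr 1; apply Finset.sum_congr rfl; intro i _; ring
  rw [energy]
  calc (1 / 2 : ℝ) * ∑ u, ∑ v, w u v * (∑ i ∈ s, c i * h i u - ∑ i ∈ s, c i * h i v) ^ 2
      ≤ (1 / 2 : ℝ) * ∑ u, ∑ v, w u v * (2 * ∑ i ∈ s, (c i) ^ 2 * (h i u - h i v) ^ 2) := by
        apply mul_le_mul_of_nonneg_left ?_ (by norm_num)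
        apply Finset.sum_le_sum; intro u _
        apply Finset.sum_le_sum; intro v _
        exact mul_le_mul_of_nonneg_left (key u v) (hnn u v)
    _ = ∑ u, ∑ v, ∑ i ∈ s, (c i) ^ 2 * (w u v * (h i u - h i v) ^ 2) := by
        rw [Finset.mul_sum]
        apply Finset.sum_congr rfl; intro u _
        rw [Finset.mul_sum]
        apply Finset.sum_congr rfl; intro v _
        rw [show (1/2:ℝ) * (w u v * (2 * ∑ i ∈ s, (c i) ^ 2 * (h i u - h i v) ^ 2))
            = w u v * ∑ i ∈ s, (c i) ^ 2 * (h i u - h i v) ^ 2 from by ring,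
          Finset.mul_sum]
        apply Finset.sum_congr rfl; intro i _; ring
    _ = ∑ i ∈ s, ∑ u, ∑ v, (c i) ^ 2 * (w u v * (h i u - h i v) ^ 2) := by
        rw [show (∑ u, ∑ v, ∑ i ∈ s, (c i) ^ 2 * (w u v * (h i u - h i v) ^ 2))
            = ∑ u, ∑ i ∈ s, ∑ v, (c i) ^ 2 * (w u v * (h i u - h i v) ^ 2) from
          Finset.sum_congr rfl fun u _ => Finset.sum_comm]
        exact Finset.sum_comm
    _ = 2 * ∑ i ∈ s, (c i) ^ 2 * energy w (h i) := by
        rw [Finset.mul_sum]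
        apply Finset.sum_congr rfl; intro i _
        have hpull : ∑ u, ∑ v, (c i) ^ 2 * (w u v * (h i u - h i v) ^ 2)
            = (c i) ^ 2 * ∑ u, ∑ v, w u v * (h i u - h i v) ^ 2 := by
          rw [Finset.mul_sum]
          apply Finset.sum_congr rfl; intro u _
          rw [Finset.mul_sum]
        rw [hpull, energy]
        ring

/-- If there are `k` disjointly supported nonzero functions whose linear combinations all
have Rayleigh quotient at most `μ`, then the `k`-th eigenvalue is at most `μ`. -/
lemma eig_le_of_disjoint (w : Fin n → Fin n → ℝ) (hsym : ∀ u v, w u v = w v u)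
    (hdeg : ∀ v, 1 ≤ deg w v) (hH : (normLap w).IsHermitian)
    {k : ℕ} (hk1 : 1 ≤ k) (hkn : k ≤ n)
    {ι : Type*} [Fintype ι] (hcard : Fintype.card ι = k) (h : ι → Fin n → ℝ)
    (hnz : ∀ i, ∃ v, h i v ≠ 0)
    (hdisj : ∀ (v : Fin n) (i j : ι), i ≠ j → h i v = 0 ∨ h j v = 0)
    {μ : ℝ}
    (hbound : ∀ c : ι → ℝ, energy w (fun v => ∑ i, c i * h i v)
        ≤ μ * normWsq w (fun v => ∑ i, c i * h i v)) :
    sortedEig hH k ≤ μ := by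
  classical
  set x : ι → EuclideanSpace ℝ (Fin n) :=
    fun i => (show EuclideanSpace ℝ (Fin n) from WithLp.toLp 2 (fun v => Real.sqrt (deg w v) * h i v)) with hx
  have hxapp : ∀ i v, x i v = Real.sqrt (deg w v) * h i v := fun _ _ => rfl
  have hli : LinearIndependent ℝ x := by
    rw [Fintype.linearIndependent_iff]
    intro g hg i
    obtain ⟨v, hv⟩ := hnz i
    have h2 : (∑ j, g j • x j) v = 0 := by rw [hg]; rfl
    rw [esum_apply] at h2
    have h3 : ∑ j, (g j • x j) v = ∑ j, g j * (Real.sqrt (deg w v) * h j v) :=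
      Finset.sum_congr rfl fun j _ => rfl
    rw [h3] at h2
    rw [Finset.sum_eq_single i (fun j _ hji => by
      rcases hdisj v j i hji with h0 | h0
      · rw [h0, mul_zero, mul_zero]
      · exact absurd h0 hv) (fun hni => absurd (Finset.mem_univ i) hni)] at h2
    rcases mul_eq_zero.1 h2 with h0 | h0
    · exact h0
    · rcases mul_eq_zero.1 h0 with h0' | h0'
      · exact absurd h0' (ne_of_gt (sqrt_deg_pos w hdeg v))
      · exact absurd h0' hv
  apply cf_upper hH hk1 hkn hcard x hli
  intro y hy
  obtain ⟨c, hc⟩ := (Submodule.mem_span_range_iff_exists_fun ℝ).1 hy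
  set g0 : Fin n → ℝ := fun v => ∑ i, c i * h i v with hg0
  have hyv : ∀ v, y v = Real.sqrt (deg w v) * g0 v := by
    intro v
    rw [← hc, esum_apply]
    have : ∑ i, (c i • x i) v = ∑ i, c i * (Real.sqrt (deg w v) * h i v) :=
      Finset.sum_congr rfl fun i _ => rfl
    rw [this, hg0, Finset.mul_sum]
    apply Finset.sum_congr rfl; intro i _; ring
  have hQ : ∑ u, ∑ v, y u * normLap w u v * y v = energy w g0 := by
    rw [← quad_form_eq w hsym hdeg g0]
    apply Finset.sum_congr rfl; intro u _
    apply Finset.sum_congr rfl; intro v _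
    rw [hyv u, hyv v]
  have hN : ∑ v, (y v)^2 = normWsq w g0 := by
    rw [← norm_form_eq w hdeg g0]
    apply Finset.sum_congr rfl; intro v _
    rw [hyv v]
  rw [hQ, hN]
  exact hbound c

/-- Building a step approximation from thresholds. -/
lemma approx_of_thresholds {k : ℕ} (w : Fin n → Fin n → ℝ) (hdeg : ∀ v, 1 ≤ deg w v)
    (f : Fin n → ℝ) (τ : Fin (2*k+1) → ℝ) (h0 : τ 0 = 0) (hm : Monotone τ)
    (I : Fin n → Fin (2*k+1)) {δ : ℝ}
    (hb : ∑ v, deg w v * (f v - τ (I v))^2 ≤ δ) :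
    ∃ g : Fin n → ℝ, IsStepApprox f g k ∧ normWsq w (f - g) ≤ δ := by
  have hmin : ∀ v : Fin n, ∃ i : Fin (2*k+1), ∀ j, |f v - τ i| ≤ |f v - τ j| :=
    fun v => Finite.exists_min (fun i => |f v - τ i|)
  choose I0 hI0 using hmin
  refine ⟨fun v => τ (I0 v), ⟨τ, h0, hm, fun v => ⟨⟨I0 v, rfl⟩, fun i => hI0 v i⟩⟩, ?_⟩
  refine le_trans ?_ hb
  rw [normWsq]
  apply Finset.sum_le_sum
  intro v _
  apply mul_le_mul_of_nonneg_left ?_ (le_trans zero_le_one (hdeg v))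
  have happ : (f - fun v => τ (I0 v)) v = f v - τ (I0 v) := rfl
  rw [happ, ← sq_abs, ← sq_abs (f v - τ (I v))]
  exact pow_le_pow_left₀ (abs_nonneg _) (hI0 v (I v)) 2

end Aux


/-- There is a `(2k+1)`-step approximation `g` of `f` with
`‖f-g‖_w² ≤ 4·R(f)/λ_k`. -/
theorem exists_step_approximation
    (hn : 2 ≤ n) (w : Fin n → Fin n → ℝ)
    (hsym : ∀ u v, w u v = w v u) (hnn : ∀ u v, 0 ≤ w u v)
    (hloop : ∀ v, w v v = 0) (hdeg : ∀ v, 1 ≤ deg w v)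
    (hH : (normLap w).IsHermitian)
    (f : Fin n → ℝ) (hfnn : ∀ v, 0 ≤ f v) (hfnorm : normWsq w f = 1)
    (k : ℕ) (hk1 : 1 ≤ k) (hkn : 2 * k + 1 ≤ n) (hlk : 0 < sortedEig hH k) :
    ∃ g : Fin n → ℝ, IsStepApprox f g k ∧
      normWsq w (f - g) ≤ 4 * rayleigh w f / sortedEig hH k := by
  classical
  have hdeg0 : ∀ v, (0:ℝ) ≤ deg w v := fun v => le_trans zero_le_one (hdeg v)
  have hEnn : 0 ≤ energy w f := energy_nonneg w hnn f
  have hray : rayleigh w f = energy w f := by rw [rayleigh, hfnorm, div_one]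
  have hkn2 : k ≤ n := by omega
  by_cases hE0 : energy w f = 0
  · -- zero-energy case
    have hterm : ∀ u v : Fin n, w u v * (f u - f v)^2 = 0 := by
      have hsum : ∑ u, ∑ v, w u v * (f u - f v)^2 = 0 := by
        have h2 : (1/2:ℝ) * ∑ u, ∑ v, w u v * (f u - f v)^2 = 0 := hE0
        linarith
      intro u v
      have h1 := (Finset.sum_eq_zero_iff_of_nonneg (fun u _ => Finset.sum_nonneg fun v _ =>
        mul_nonneg (hnn u v) (sq_nonneg _))).1 hsum u (Finset.mem_univ u)
      exact (Finset.sum_eq_zero_iff_of_nonneg (fun v _ =>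
        mul_nonneg (hnn u v) (sq_nonneg _))).1 h1 v (Finset.mem_univ v)
    have hedge : ∀ u v, w u v ≠ 0 → f u = f v := by
      intro u v hw
      rcases mul_eq_zero.1 (hterm u v) with h | h
      · exact absurd h hw
      · have h2 : f u - f v = 0 := by
          have := sq_eq_zero_iff.1 h
          exact this
        linarith
    set Pos : Finset ℝ := (Finset.image f Finset.univ).filter (fun a => 0 < a) with hPos
    have hPosmem : ∀ a : ℝ, a ∈ Pos → 0 < a := fun a ha => (Finset.mem_filter.1 ha).2
    have hPosim : ∀ a : ℝ, a ∈ Pos → ∃ v, f v = a := by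
      intro a ha
      obtain ⟨v, _, hv⟩ := Finset.mem_image.1 (Finset.mem_filter.1 ha).1
      exact ⟨v, hv⟩
    have hPosintro : ∀ v : Fin n, 0 < f v → f v ∈ Pos := fun v hv =>
      Finset.mem_filter.2 ⟨Finset.mem_image.2 ⟨v, Finset.mem_univ v, rfl⟩, hv⟩
    have hcard : Pos.card < k := by
      by_contra hcon
      push_neg at hcon
      obtain ⟨G, hGsub, hGcard⟩ := Finset.exists_subset_card_eq hcon
      haveI : Nonempty {a // a ∈ G} := by
        rw [← Fintype.card_pos_iff, Fintype.card_coe, hGcard]; omega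
      set hfam : {a // a ∈ G} → Fin n → ℝ := fun a v => if f v = a.1 then 1 else 0 with hhfam
      have hnz : ∀ a : {a // a ∈ G}, ∃ v, hfam a v ≠ 0 := by
        intro a
        obtain ⟨v, hva⟩ := hPosim a.1 (hGsub a.2)
        exact ⟨v, by rw [hhfam]; simp [hva]⟩
      have hdisj : ∀ (v : Fin n) (i j : {a // a ∈ G}), i ≠ j → hfam i v = 0 ∨ hfam j v = 0 := by
        intro v i j hij
        by_cases hfi : f v = i.1
        · right
          have hfj : f v ≠ j.1 := by
            intro hcontra
            exact hij (Subtype.ext (by rw [← hfi, hcontra]))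
          rw [hhfam]; simp [hfj]
        · left; rw [hhfam]; simp [hfi]
      have hb : sortedEig hH k ≤ 0 := by
        apply eig_le_of_disjoint w hsym hdeg hH hk1 hkn2
          (by rw [Fintype.card_coe, hGcard]) hfam hnz hdisj
        intro c
        have hzero : energy w (fun v => ∑ i, c i * hfam i v) = 0 := by
          rw [energy]
          rw [Finset.sum_eq_zero fun u _ => Finset.sum_eq_zero fun v _ => ?_]
          · ring
          · by_cases hw : w u v = 0
            · rw [hw, zero_mul]
            · have hf := hedge u v hw
              have hsame : ∀ i : {a // a ∈ G}, hfam i u = hfam i v := by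
                intro i; rw [hhfam]; simp only [hf]
              rw [show (∑ i, c i * hfam i u) = (∑ i, c i * hfam i v) from
                Finset.sum_congr rfl fun i _ => by rw [hsame i]]
              simp
        rw [hzero, zero_mul]
      linarith [hlk]
    set r := Pos.card with hr
    set e := Pos.orderIsoOfFin rfl with he
    set s : Fin (2*k+1) → ℝ := fun i => if hlt : (i:ℕ) < r then (e ⟨i, hlt⟩ : ℝ) else 0 with hs
    set τ : Fin (2*k+1) → ℝ := s ∘ Tuple.sort s with hτ
    have hmono : Monotone τ := Tuple.monotone_sort s
    have hsnn : ∀ i, 0 ≤ s i := by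
      intro i; rw [hs]; dsimp only
      split_ifs with hlt
      · exact le_of_lt (hPosmem _ (e ⟨i, hlt⟩).2)
      · exact le_refl 0
    have hs0 : ∃ i, s i = 0 := by
      refine ⟨⟨2*k, by omega⟩, ?_⟩
      rw [hs]; dsimp only
      rw [dif_neg (by simp; omega)]
    have hτ0 : τ 0 = 0 := by
      obtain ⟨i0, hi0⟩ := hs0
      have h1 : τ 0 ≤ τ ((Tuple.sort s).symm i0) := hmono (Fin.zero_le _)
      have h2 : τ ((Tuple.sort s).symm i0) = 0 := by
        rw [hτ]; simp only [Function.comp_apply, Equiv.apply_symm_apply]; exact hi0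
      have h3 : 0 ≤ τ 0 := by rw [hτ]; exact hsnn _
      rw [h2] at h1
      linarith
    have hIex : ∀ v, ∃ j : Fin (2*k+1), τ j = f v := by
      intro v
      rcases eq_or_lt_of_le (hfnn v) with h0 | hpos
      · obtain ⟨i0, hi0⟩ := hs0
        refine ⟨(Tuple.sort s).symm i0, ?_⟩
        rw [hτ]; simp only [Function.comp_apply, Equiv.apply_symm_apply]
        rw [hi0, ← h0]
      · have hmem : f v ∈ Pos := hPosintro v hpos
        obtain ⟨i1, hi1⟩ := e.surjective ⟨f v, hmem⟩
        have hi1lt : (i1 : ℕ) < 2*k+1 := by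
          have h1 := i1.2
          omega
        refine ⟨(Tuple.sort s).symm ⟨i1, hi1lt⟩, ?_⟩
        rw [hτ]; simp only [Function.comp_apply, Equiv.apply_symm_apply]
        rw [hs]; dsimp only
        rw [dif_pos (show ((⟨(i1:ℕ), hi1lt⟩ : Fin (2*k+1)) : ℕ) < r from i1.2)]
        have hfin : (⟨((⟨(i1:ℕ), hi1lt⟩ : Fin (2*k+1)) : ℕ), i1.2⟩ : Fin r) = i1 := by
          apply Fin.ext; rfl
        rw [hfin, hi1]
    choose I hI using hIex
    apply approx_of_thresholds w hdeg f τ hτ0 hmono I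
    have hzero : ∀ v, deg w v * (f v - τ (I v))^2 = 0 := by
      intro v; rw [hI v]; ring_nf
    rw [Finset.sum_eq_zero fun v _ => hzero v]
    rw [hray, hE0]
    simp
  · -- positive-energy case
    have hEpos : 0 < energy w f := lt_of_le_of_ne hEnn (Ne.symm hE0)
    set E := energy w f with hEdef
    set lam := sortedEig hH k with hlam
    set δ₀ : ℝ := 4 * rayleigh w f / lam with hδ₀
    have hδval : δ₀ = 4 * E / lam := by rw [hδ₀, hray]
    have hδpos : 0 < δ₀ := by rw [hδval]; exact div_pos (by linarith) hlk
    set c0 : ℝ := δ₀ / (2*k) with hc0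
    have h2kpos : (0:ℝ) < 2*k := by
      have : (0:ℕ) < 2*k := by omega
      exact_mod_cast this
    have hc0pos : 0 < c0 := div_pos hδpos h2kpos
    have huniv : (Finset.univ : Finset (Fin n)).Nonempty := ⟨⟨0, by omega⟩, Finset.mem_univ _⟩
    set M : ℝ := Finset.univ.sup' huniv f with hM
    have hfM : ∀ v, f v ≤ M := fun v => Finset.le_sup' f (Finset.mem_univ v)
    have hM0 : 0 ≤ M := le_trans (hfnn ⟨0, by omega⟩) (hfM _)
    set Err : ℝ → ℝ → ℝ := fun a b => ∑ v, deg w v * (tentf a b (f v))^2 with hErr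
    have hErr_diag : ∀ a, Err a a = 0 := by
      intro a; rw [hErr]; dsimp only
      apply Finset.sum_eq_zero; intro v _
      have htent : tentf a a (f v) = 0 := by
        rcases le_total (f v) a with hle | hle
        · exact tentf_eq_zero_left hle
        · exact tentf_eq_zero_right hle
      rw [htent]; ring
    have hcont : ∀ a, Continuous (fun b => Err a b) := by
      intro a
      rw [hErr]; dsimp only
      apply continuous_finset_sum
      intro v _
      apply Continuous.mul continuous_const
      apply Continuous.pow
      simp only [tentf]
      exact Continuous.max continuous_const
        (Continuous.min continuous_const (continuous_id.sub continuous_const))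
    set t : ℕ → ℝ := fun i => Nat.rec (motive := fun _ => ℝ) 0
      (fun _ ti => if c0 ≤ Err ti M then sInf {b | b ∈ Set.Icc ti M ∧ c0 ≤ Err ti b} else M) i
      with ht
    have ht0 : t 0 = 0 := rfl
    have htsucc : ∀ i, t (i+1) = if c0 ≤ Err (t i) M then
        sInf {b | b ∈ Set.Icc (t i) M ∧ c0 ≤ Err (t i) b} else M := fun i => rfl
    have hstep : ∀ i, t i ≤ M →
        t i ≤ t (i+1) ∧ t (i+1) ≤ M ∧ Err (t i) (t (i+1)) ≤ c0 ∧
          (c0 ≤ Err (t i) M → Err (t i) (t (i+1)) = c0) := by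
      intro i hi
      rw [htsucc i]
      by_cases hc : c0 ≤ Err (t i) M
      · rw [if_pos hc]
        have hSne : ({b | b ∈ Set.Icc (t i) M ∧ c0 ≤ Err (t i) b}).Nonempty :=
          ⟨M, ⟨⟨hi, le_refl M⟩, hc⟩⟩
        have hSbdd : BddBelow {b | b ∈ Set.Icc (t i) M ∧ c0 ≤ Err (t i) b} :=
          ⟨t i, fun b hb => hb.1.1⟩
        have hclosed : IsClosed {b | b ∈ Set.Icc (t i) M ∧ c0 ≤ Err (t i) b} := by
          have hrw : {b | b ∈ Set.Icc (t i) M ∧ c0 ≤ Err (t i) b}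
              = Set.Icc (t i) M ∩ {b | c0 ≤ Err (t i) b} := rfl
          rw [hrw]
          exact IsClosed.inter isClosed_Icc (isClosed_le continuous_const (hcont (t i)))
        have hmem := hclosed.csInf_mem hSne hSbdd
        have hlb : t i ≤ sInf {b | b ∈ Set.Icc (t i) M ∧ c0 ≤ Err (t i) b} :=
          le_csInf hSne (fun b hb => hb.1.1)
        have hub : sInf {b | b ∈ Set.Icc (t i) M ∧ c0 ≤ Err (t i) b} ≤ M :=
          csInf_le hSbdd ⟨⟨hi, le_refl M⟩, hc⟩
        have hEq : Err (t i) (sInf {b | b ∈ Set.Icc (t i) M ∧ c0 ≤ Err (t i) b}) = c0 := by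
          have hub2 : c0 ≤ Err (t i) (sInf {b | b ∈ Set.Icc (t i) M ∧ c0 ≤ Err (t i) b}) := hmem.2
          have hcmem : c0 ∈ Set.Icc (Err (t i) (t i))
              (Err (t i) (sInf {b | b ∈ Set.Icc (t i) M ∧ c0 ≤ Err (t i) b})) := by
            constructor
            · rw [hErr_diag]; exact le_of_lt hc0pos
            · exact hub2
          obtain ⟨b, hb, hberr⟩ := intermediate_value_Icc hlb (hcont (t i)).continuousOn hcmem
          have hble : sInf {b | b ∈ Set.Icc (t i) M ∧ c0 ≤ Err (t i) b} ≤ b :=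
            csInf_le hSbdd ⟨⟨hb.1, le_trans hb.2 hub⟩, le_of_eq hberr.symm⟩
          have hbeq : b = sInf {b | b ∈ Set.Icc (t i) M ∧ c0 ≤ Err (t i) b} :=
            le_antisymm hb.2 hble
          rw [← hbeq]; exact hberr
        exact ⟨hlb, hub, le_of_eq hEq, fun _ => hEq⟩
      · rw [if_neg hc]
        push_neg at hc
        exact ⟨hi, le_refl M, le_of_lt hc, fun hcontra => absurd hcontra (not_le.2 hc)⟩
    have htM : ∀ i, t i ≤ M := by
      intro i; induction i with
      | zero => rw [ht0]; exact hM0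
      | succ i ih => exact (hstep i ih).2.1
    have htmono : Monotone t := monotone_nat_of_le_succ (fun i => (hstep i (htM i)).1)
    have hErrle : ∀ i, Err (t i) (t (i+1)) ≤ c0 := fun i => (hstep i (htM i)).2.2.1
    by_cases hcov : ∀ v, f v ≤ t (2*k)
    · -- Case A: the thresholds cover all values
      set τ : Fin (2*k+1) → ℝ := fun i => t i with hτA
      have hτ0 : τ 0 = 0 := by rw [hτA]; simp only [Fin.val_zero]; exact ht0
      have hτmono : Monotone τ := fun i j hij => htmono (by exact_mod_cast hij)
      have hcov2 : ∀ v, ∃ j, j < 2*k ∧ t j ≤ f v ∧ f v ≤ t (j+1) := by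
        intro v
        set Jv := (Finset.range (2*k)).filter (fun j => t j ≤ f v) with hJv
        have hJne : Jv.Nonempty :=
          ⟨0, Finset.mem_filter.2 ⟨Finset.mem_range.2 (by omega), by rw [ht0]; exact hfnn v⟩⟩
        set j0 := Jv.max' hJne with hj0
        have hj0mem' : j0 < 2*k ∧ t j0 ≤ f v := by
          have h := Finset.mem_filter.1 (Jv.max'_mem hJne)
          exact ⟨Finset.mem_range.1 h.1, h.2⟩
        refine ⟨j0, hj0mem'.1, hj0mem'.2, ?_⟩
        by_cases hlast : j0 + 1 < 2*k
        · by_contra hgt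
          push_neg at hgt
          have hmem2 : j0 + 1 ∈ Jv :=
            Finset.mem_filter.2 ⟨Finset.mem_range.2 hlast, le_of_lt hgt⟩
          have := Finset.le_max' Jv _ hmem2
          omega
        · have hj1 : j0 + 1 = 2*k := by omega
          rw [hj1]; exact hcov v
      choose jv hjv using hcov2
      set I : Fin n → Fin (2*k+1) := fun v =>
        if f v - t (jv v) ≤ t (jv v + 1) - f v then
          ⟨jv v, by have := (hjv v).1; omega⟩
        else ⟨jv v + 1, by have := (hjv v).1; omega⟩ with hIdef
      apply approx_of_thresholds w hdeg f τ hτ0 hτmono I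
      have hptwise : ∀ v, deg w v * (f v - τ (I v))^2
          ≤ ∑ j ∈ Finset.range (2*k), deg w v * (tentf (t j) (t (j+1)) (f v))^2 := by
        intro v
        obtain ⟨hjlt, hjle, hjge⟩ := hjv v
        have hkey : (f v - τ (I v))^2 = (tentf (t (jv v)) (t (jv v + 1)) (f v))^2 := by
          have htent : tentf (t (jv v)) (t (jv v + 1)) (f v)
              = min (f v - t (jv v)) (t (jv v + 1) - f v) := by
            rw [tentf, max_eq_right]
            apply le_min <;> linarith
          have hIval : τ (I v) = if f v - t (jv v) ≤ t (jv v + 1) - f v then t (jv v)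
              else t (jv v + 1) := by
            simp only [hIdef]
            split_ifs <;> rfl
          rw [hIval, htent]
          rcases le_or_gt (f v - t (jv v)) (t (jv v + 1) - f v) with hcc | hcc
          · rw [if_pos hcc, min_eq_left hcc]
          · rw [if_neg (not_le.2 hcc), min_eq_right hcc.le,
              show (f v - t (jv v + 1))^2 = (t (jv v + 1) - f v)^2 from by ring]
        rw [hkey]
        exact Finset.single_le_sum
          (f := fun j => deg w v * (tentf (t j) (t (j+1)) (f v))^2)
          (fun j _ => mul_nonneg (hdeg0 v) (sq_nonneg _)) (Finset.mem_range.2 hjlt)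
      calc ∑ v, deg w v * (f v - τ (I v))^2
          ≤ ∑ v, ∑ j ∈ Finset.range (2*k), deg w v * (tentf (t j) (t (j+1)) (f v))^2 :=
            Finset.sum_le_sum fun v _ => hptwise v
        _ = ∑ j ∈ Finset.range (2*k), Err (t j) (t (j+1)) := by
            rw [Finset.sum_comm]
        _ ≤ ∑ _j ∈ Finset.range (2*k), c0 := Finset.sum_le_sum fun j _ => hErrle j
        _ = (2*k) * c0 := by
            rw [Finset.sum_const, Finset.card_range, nsmul_eq_mul]
            push_cast
            ring
        _ = δ₀ := by
            rw [hc0]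
            field_simp
    · -- Case B: impossible
      exfalso
      push_neg at hcov
      obtain ⟨v0, hv0⟩ := hcov
      have hallc : ∀ i, i < 2*k → Err (t i) (t (i+1)) = c0 := by
        intro i hi
        by_cases hc : c0 ≤ Err (t i) M
        · exact (hstep i (htM i)).2.2.2 hc
        · exfalso
          have hM' : t (i+1) = M := by rw [htsucc i, if_neg hc]
          have hmle : M ≤ t (2*k) := by
            rw [← hM']
            exact htmono (by omega : i+1 ≤ 2*k)
          linarith [hfM v0]
      set hfam : ℕ → Fin n → ℝ := fun j v => tentf (t j) (t (j+1)) (f v) with hhfam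
      have hnorm : ∀ j, j < 2*k → normWsq w (hfam j) = c0 := by
        intro j hj
        rw [← hallc j hj]
        simp only [hErr, normWsq, hhfam]
      have hesum : ∑ j ∈ Finset.range (2*k), energy w (hfam j) ≤ E := by
        have hswap : ∑ j ∈ Finset.range (2*k), energy w (hfam j)
            = (1/2:ℝ) * ∑ u, ∑ v, w u v * ∑ j ∈ Finset.range (2*k), (hfam j u - hfam j v)^2 := by
          simp only [energy]
          rw [← Finset.mul_sum]
          congr 1
          rw [Finset.sum_comm]
          apply Finset.sum_congr rfl; intro u _
          rw [Finset.sum_comm]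
          apply Finset.sum_congr rfl; intro v _
          rw [Finset.mul_sum]
        rw [hswap, hEdef, energy]
        apply mul_le_mul_of_nonneg_left ?_ (by norm_num)
        apply Finset.sum_le_sum; intro u _
        apply Finset.sum_le_sum; intro v _
        exact mul_le_mul_of_nonneg_left
          (tent_sq_sum' t htmono (2*k) (f u) (f v)) (hnn u v)
      have hkp1 : (0:ℝ) < (k:ℝ) + 1 := by positivity
      have hEk : (0:ℝ) < E/((k:ℝ)+1) := div_pos hEpos hkp1
      set good := (Finset.range (2*k)).filter
        (fun j => energy w (hfam j) ≤ E/((k:ℝ)+1)) with hgood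
      set bad := (Finset.range (2*k)).filter
        (fun j => ¬ (energy w (hfam j) ≤ E/((k:ℝ)+1))) with hbad
      have hbadcard : bad.card ≤ k := by
        by_contra hcon
        push_neg at hcon
        have hbne : bad.Nonempty := Finset.card_pos.1 (by omega)
        have hlt : ∑ _j ∈ bad, (E/((k:ℝ)+1)) < ∑ j ∈ bad, energy w (hfam j) :=
          Finset.sum_lt_sum_of_nonempty hbne
            (fun j hj => lt_of_not_ge (Finset.mem_filter.1 hj).2)
        have hconst : ∑ _j ∈ bad, (E/((k:ℝ)+1)) = (bad.card : ℝ) * (E/((k:ℝ)+1)) := by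
          rw [Finset.sum_const, nsmul_eq_mul]
        have hble : ∑ j ∈ bad, energy w (hfam j) ≤ E :=
          le_trans (Finset.sum_le_sum_of_subset_of_nonneg (Finset.filter_subset _ _)
            (fun j _ _ => energy_nonneg w hnn _)) hesum
        have hge : ((k:ℝ)+1) * (E/((k:ℝ)+1)) ≤ (bad.card : ℝ) * (E/((k:ℝ)+1)) := by
          apply mul_le_mul_of_nonneg_right ?_ (le_of_lt hEk)
          have hcast : ((k+1 : ℕ) : ℝ) ≤ (bad.card : ℝ) := by exact_mod_cast hcon
          push_cast at hcast
          linarith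
        have hid : ((k:ℝ)+1) * (E/((k:ℝ)+1)) = E := by field_simp
        linarith
      have hgoodcard : k ≤ good.card := by
        have hsubun : Finset.range (2*k) ⊆ good ∪ bad := by
          intro j hj
          rcases le_or_gt (energy w (hfam j)) (E/((k:ℝ)+1)) with hle | hltj
          · exact Finset.mem_union_left _ (Finset.mem_filter.2 ⟨hj, hle⟩)
          · exact Finset.mem_union_right _ (Finset.mem_filter.2 ⟨hj, not_le.2 hltj⟩)
        have hcardun : 2*k ≤ good.card + bad.card :=
          calc 2*k = (Finset.range (2*k)).card := (Finset.card_range _).symm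
            _ ≤ (good ∪ bad).card := Finset.card_le_card hsubun
            _ ≤ good.card + bad.card := Finset.card_union_le _ _
        omega
      obtain ⟨G, hGsub, hGcard⟩ := Finset.exists_subset_card_eq hgoodcard
      haveI : Nonempty {j // j ∈ G} := by
        rw [← Fintype.card_pos_iff, Fintype.card_coe, hGcard]; omega
      have hGrange : ∀ j ∈ G, j < 2*k :=
        fun j hj => Finset.mem_range.1 (Finset.mem_filter.1 (hGsub hj)).1
      have hGgood : ∀ j ∈ G, energy w (hfam j) ≤ E/((k:ℝ)+1) :=
        fun j hj => (Finset.mem_filter.1 (hGsub hj)).2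
      have hdisjG : ∀ (v : Fin n) (i j : {j // j ∈ G}), i ≠ j → hfam i.1 v = 0 ∨ hfam j.1 v = 0 := by
        intro v i j hij
        have hij' : i.1 ≠ j.1 := fun hcontra => hij (Subtype.ext hcontra)
        have hkey : ∀ a b : ℕ, a < b → hfam a v = 0 ∨ hfam b v = 0 := by
          intro a b hab
          by_cases hz : hfam a v = 0
          · left; exact hz
          · right
            obtain ⟨h1, h2⟩ := tentf_support hz
            apply tentf_eq_zero_left
            exact le_trans (le_of_lt h2) (htmono (by omega : a+1 ≤ b))
        rcases lt_or_gt_of_ne hij' with hlt | hlt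
        · exact hkey _ _ hlt
        · exact (hkey _ _ hlt).symm
      have hspec : sortedEig hH k ≤ 2*E/(((k:ℝ)+1)*c0) := by
        apply eig_le_of_disjoint w hsym hdeg hH hk1 hkn2
          (by rw [Fintype.card_coe, hGcard]) (fun j : {j // j ∈ G} => hfam j.1)
        · intro i
          have hnzi : normWsq w (hfam i.1) = c0 := hnorm i.1 (hGrange i.1 i.2)
          by_contra hcontra
          push_neg at hcontra
          have hzero : normWsq w (hfam i.1) = 0 := by
            rw [normWsq]
            apply Finset.sum_eq_zero; intro v _; rw [hcontra v]; ring
          rw [hzero] at hnzi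
          linarith
        · exact hdisjG
        · intro cc
          have hdisj' : ∀ v : Fin n, ∀ i ∈ (Finset.univ : Finset {j // j ∈ G}),
              ∀ jj ∈ (Finset.univ : Finset {j // j ∈ G}), i ≠ jj →
                hfam i.1 v = 0 ∨ hfam jj.1 v = 0 :=
            fun v i _ jj _ hij => hdisjG v i jj hij
          calc energy w (fun v => ∑ i, cc i * hfam i.1 v)
              ≤ 2 * ∑ i, (cc i)^2 * energy w (hfam i.1) :=
                energy_combination w hnn Finset.univ Finset.univ_nonempty cc _ hdisj'
            _ ≤ 2 * ∑ i : {j // j ∈ G}, (cc i)^2 * (E/((k:ℝ)+1)) := by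
                apply mul_le_mul_of_nonneg_left ?_ (by norm_num)
                apply Finset.sum_le_sum; intro i _
                exact mul_le_mul_of_nonneg_left (hGgood i.1 i.2) (sq_nonneg _)
            _ = (2*E/(((k:ℝ)+1)*c0)) * ∑ i : {j // j ∈ G}, (cc i)^2 * c0 := by
                rw [← Finset.sum_mul, ← Finset.sum_mul]
                have hc0ne : c0 ≠ 0 := ne_of_gt hc0pos
                field_simp
            _ = (2*E/(((k:ℝ)+1)*c0)) * normWsq w (fun v => ∑ i, cc i * hfam i.1 v) := by
                congr 1
                rw [normWsq_combination w Finset.univ cc _ hdisj']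
                apply Finset.sum_congr rfl; intro i _
                rw [hnorm i.1 (hGrange i.1 i.2)]
      have hμlt : 2*E/(((k:ℝ)+1)*c0) < lam := by
        have hkpos : (0:ℝ) < (k:ℝ) := by
          have : (0:ℕ) < k := hk1
          exact_mod_cast this
        have hc0ne : c0 ≠ 0 := ne_of_gt hc0pos
        have hlamne : lam ≠ 0 := ne_of_gt hlk
        have hkne : (k:ℝ) ≠ 0 := ne_of_gt hkpos
        have hEne : E ≠ 0 := ne_of_gt hEpos
        have hval : 2*E/(((k:ℝ)+1)*c0) = lam * k/((k:ℝ)+1) := by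
          rw [hc0, hδval]
          field_simp
          ring
        rw [hval, div_lt_iff₀ hkp1]
        nlinarith [hlk]
      rw [← hlam] at hspec
      linarith

end

end CheegerHigher
end

section
/- Let U ⊆ V, let H = (U, E(U)) be the induced subgraph of G on U (with the same edge weights), and let f : V → ℝ be a nonzero function with f(v) = 0 for all v ∉ U and with Σ_{v ∈ U} w_H(v)·f(v)² > 0. Let (L, R) be a partition of V∖U, and define the uncutness of an induced cut (L', R') (disjoint subsets of V) as γ(L', R') = w(E(L')) + w(E(R')) + w(E(L'∪R', V∖(L'∪R'))). Suppose that for every t > 0 with L_f(t) ∪ R_f(t) ≠ ∅, both γ(L ∪ L_f(t), R ∪ R_f(t)) > γ(L, R) and γ(L ∪ R_f(t), R ∪ L_f(t)) > γ(L, R). Then √(72·R⁺_H(f|_U)) ≥ R⁺_G(f), where R⁺_H is the signless Rayleigh quotient computed in H and R⁺_G the signless Rayleigh quotient computed in G. -/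
open scoped Classical

namespace CheegerHigher

noncomputable section

variable {n : ℕ}

section Helpers

variable (T : Finset ℝ)


noncomputable def pred (s : ℝ) : ℝ :=
  if h : (T.filter (· < s)).Nonempty then (T.filter (· < s)).max' h else 0

noncomputable def mu (s : ℝ) : ℝ := s ^ 2 - (pred T s) ^ 2

lemma pred_lt {s : ℝ} (h0 : (0:ℝ) ∈ T) (hs : 0 < s) : pred T s < s := by
  have hne : (T.filter (· < s)).Nonempty := ⟨0, by simp [h0, hs]⟩
  rw [pred, dif_pos hne]
  have := (T.filter (· < s)).max'_mem hne
  simpa using (Finset.mem_filter.1 this).2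

lemma pred_nonneg {s : ℝ} (h0 : (0:ℝ) ∈ T) (hs : 0 < s) : 0 ≤ pred T s := by
  have hne : (T.filter (· < s)).Nonempty := ⟨0, by simp [h0, hs]⟩
  rw [pred, dif_pos hne]
  exact Finset.le_max' _ 0 (by simp [h0, hs])

lemma mu_nonneg {s : ℝ} (h0 : (0:ℝ) ∈ T) (hs : 0 < s) : 0 ≤ mu T s := by
  have h1 := pred_lt T h0 hs
  have h2 := pred_nonneg T h0 hs
  have : (pred T s) ^ 2 ≤ s ^ 2 := by nlinarith
  simpa [mu] using this

noncomputable def Isum (c : ℝ) : ℝ := ∑ s ∈ T.filter (fun s => 0 < s ∧ s ≤ c), mu T s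

lemma Isum_nonpos {c : ℝ} (hc : c ≤ 0) : Isum T c = 0 := by
  rw [Isum]
  have : T.filter (fun s => 0 < s ∧ s ≤ c) = ∅ := by
    apply Finset.filter_false_of_mem
    intro x _ hx
    rcases hx with ⟨h1, h2⟩
    linarith
  rw [this, Finset.sum_empty]

lemma Isum_eq (h0 : (0:ℝ) ∈ T) : ∀ c ∈ T, 0 ≤ c → Isum T c = c ^ 2 := by
  have key : ∀ m : ℕ, ∀ c ∈ T, 0 ≤ c → (T.filter (· < c)).card = m → Isum T c = c ^ 2 := by
    intro m
    induction m using Nat.strong_induction_on with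
    | _ m ih =>
      intro c hc hc0 hm
      rcases eq_or_lt_of_le hc0 with h | h
      · rw [Isum]
        rw [Finset.filter_false_of_mem, Finset.sum_empty, ← h]
        · ring
        · intro x _ hx; rcases hx with ⟨h1, h2⟩; linarith [h ▸ h2]
      · -- c > 0
        set p := pred T c with hp
        have hne : (T.filter (· < c)).Nonempty := ⟨0, by simp [h0, h]⟩
        have hpm : p ∈ T.filter (· < c) := by
          rw [hp, pred, dif_pos hne]; exact (T.filter (· < c)).max'_mem hne
        have hpT : p ∈ T := (Finset.mem_filter.1 hpm).1
        have hpc : p < c := by simpa using (Finset.mem_filter.1 hpm).2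
        have hp0 : 0 ≤ p := pred_nonneg T h0 h
        have hmax : ∀ x ∈ T, x < c → x ≤ p := by
          intro x hx hxc
          rw [hp, pred, dif_pos hne]
          exact Finset.le_max' _ x (by simp [hx, hxc])
        have hsplit : T.filter (fun s => 0 < s ∧ s ≤ c)
            = insert c (T.filter (fun s => 0 < s ∧ s ≤ p)) := by
          ext x
          simp only [Finset.mem_filter, Finset.mem_insert]
          constructor
          · rintro ⟨hxT, hx0, hxc⟩
            rcases eq_or_lt_of_le hxc with h1 | h1
            · exact Or.inl h1
            · exact Or.inr ⟨hxT, hx0, hmax x hxT h1⟩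
          · rintro (rfl | ⟨hxT, hx0, hxp⟩)
            · exact ⟨hc, h, le_refl _⟩
            · exact ⟨hxT, hx0, le_trans hxp (le_of_lt hpc)⟩
        have hcnot : c ∉ T.filter (fun s => 0 < s ∧ s ≤ p) := by
          simp only [Finset.mem_filter]
          rintro ⟨_, _, hcp⟩; linarith
        have hcard : (T.filter (· < p)).card < m := by
          rw [← hm]
          apply Finset.card_lt_card
          constructor
          · intro x hx
            simp only [Finset.mem_filter] at hx ⊢
            exact ⟨hx.1, lt_trans hx.2 hpc⟩
          · intro hsub
            have := hsub hpm
            simp at this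
        have hIH : Isum T p = p ^ 2 := ih _ hcard p hpT hp0 rfl
        rw [Isum, hsplit, Finset.sum_insert hcnot]
        rw [show (∑ s ∈ T.filter (fun s => 0 < s ∧ s ≤ p), mu T s) = Isum T p from rfl, hIH]
        rw [mu, ← hp]
        ring
  intro c hc hc0
  exact key _ c hc hc0 rfl


lemma Jsum_eq (h0 : (0:ℝ) ∈ T) {a b : ℝ} (ha : a ∈ T) (hb : b ∈ T) (ha0 : 0 ≤ a) (hb0 : 0 ≤ b) :
    ∑ s ∈ T.filter (fun s => b < s ∧ s ≤ a), mu T s = a ^ 2 - (min a b) ^ 2 := by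
  have hmT : min a b ∈ T := by rcases min_cases a b with ⟨h, _⟩ | ⟨h, _⟩ <;> rw [h] <;> assumption
  have hm0 : 0 ≤ min a b := le_min ha0 hb0
  have hsplit : T.filter (fun s => 0 < s ∧ s ≤ a)
      = (T.filter (fun s => b < s ∧ s ≤ a)) ∪ (T.filter (fun s => 0 < s ∧ s ≤ min a b)) := by
    ext x
    simp only [Finset.mem_filter, Finset.mem_union]
    constructor
    · rintro ⟨hxT, hx0, hxa⟩
      rcases le_or_gt x b with h1 | h1
      · exact Or.inr ⟨hxT, hx0, le_min hxa h1⟩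
      · exact Or.inl ⟨hxT, h1, hxa⟩
    · rintro (⟨hxT, hx1, hx2⟩ | ⟨hxT, hx1, hx2⟩)
      · exact ⟨hxT, lt_of_le_of_lt hb0 hx1, hx2⟩
      · exact ⟨hxT, hx1, le_trans hx2 (min_le_left _ _)⟩
  have hdisj : Disjoint (T.filter (fun s => b < s ∧ s ≤ a)) (T.filter (fun s => 0 < s ∧ s ≤ min a b)) := by
    rw [Finset.disjoint_filter]
    rintro x _ ⟨hx1, _⟩ ⟨_, hx2⟩
    have := le_trans hx2 (min_le_right a b)
    linarith
  have h1 : Isum T a = (∑ s ∈ T.filter (fun s => b < s ∧ s ≤ a), mu T s) + Isum T (min a b) := by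
    rw [Isum, hsplit, Finset.sum_union hdisj]; rfl
  have h2 := Isum_eq T h0 a ha ha0
  have h3 := Isum_eq T h0 (min a b) hmT hm0
  linarith


lemma ind_sum (h0 : (0:ℝ) ∈ T) (c : ℝ) (hc : 0 ≤ c → c ∈ T) :
    ∑ s ∈ T.filter (fun s => 0 < s), mu T s * (if s ≤ c then 1 else 0)
      = (max c 0) ^ 2 := by
  have h1 : ∑ s ∈ T.filter (fun s => 0 < s), mu T s * (if s ≤ c then 1 else 0)
      = ∑ s ∈ T.filter (fun s => 0 < s ∧ s ≤ c), mu T s := by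
    have h2 := Finset.sum_filter (s := T.filter (fun s => 0 < s))
      (p := fun s => s ≤ c) (f := fun s => mu T s)
    rw [Finset.filter_filter] at h2
    rw [h2]
    exact Finset.sum_congr rfl fun s _ => by split_ifs <;> ring
  rw [h1]
  rcases le_or_gt 0 c with h | h
  · rw [max_eq_left h]
    have h3 := Isum_eq T h0 c (hc h) h
    rwa [Isum] at h3
  · rw [max_eq_right (le_of_lt h)]
    have h3 := Isum_nonpos T (le_of_lt h)
    rw [Isum] at h3
    rw [h3]
    ring

lemma ind_sum2 (h0 : (0:ℝ) ∈ T) {a b : ℝ} (haT : a ∈ T) (hbT : b ∈ T)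
    (ha0 : 0 ≤ a) (hb0 : 0 ≤ b) :
    ∑ s ∈ T.filter (fun s => 0 < s),
        mu T s * ((if s ≤ a then 1 else 0) * (if s ≤ b then 0 else 1))
      = a ^ 2 - (min a b) ^ 2 := by
  have h1 : ∑ s ∈ T.filter (fun s => 0 < s),
        mu T s * ((if s ≤ a then 1 else 0) * (if s ≤ b then 0 else 1))
      = ∑ s ∈ T.filter (fun s => 0 < s ∧ (s ≤ a ∧ ¬ s ≤ b)), mu T s := by
    have hh := Finset.sum_filter (s := T.filter (fun s => 0 < s))
      (p := fun s => s ≤ a ∧ ¬ s ≤ b) (f := fun s => mu T s)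
    rw [Finset.filter_filter] at hh
    rw [hh]
    exact Finset.sum_congr rfl fun s _ => by
      rcases em (s ≤ a) with h2 | h2 <;> rcases em (s ≤ b) with h3 | h3 <;>
        simp [h2, h3]
  rw [h1]
  have h2 : T.filter (fun s => 0 < s ∧ (s ≤ a ∧ ¬ s ≤ b))
      = T.filter (fun s => b < s ∧ s ≤ a) := by
    apply Finset.filter_congr
    intro x _
    constructor
    · rintro ⟨_, hx2, hx3⟩; exact ⟨lt_of_not_ge hx3, hx2⟩
    · rintro ⟨hx1, hx2⟩; exact ⟨lt_of_le_of_lt hb0 hx1, hx2, not_le.2 hx1⟩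
  rw [h2]
  exact Jsum_eq T h0 haT hbT ha0 hb0



end Helpers

section Helpers2

variable {w : Fin n → Fin n → ℝ}


lemma cw_comm (hsym : ∀ u v, w u v = w v u) (A B : Finset (Fin n)) :
    cutWeight w A B = cutWeight w B A := by
  rw [cutWeight, cutWeight, Finset.sum_comm]
  exact Finset.sum_congr rfl fun u _ => Finset.sum_congr rfl fun v _ => hsym v u

lemma cw_union_left {A B : Finset (Fin n)} (h : Disjoint A B) (C : Finset (Fin n)) :
    cutWeight w (A ∪ B) C = cutWeight w A C + cutWeight w B C :=
  Finset.sum_union h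

lemma cw_union_right {A B : Finset (Fin n)} (h : Disjoint A B) (C : Finset (Fin n)) :
    cutWeight w C (A ∪ B) = cutWeight w C A + cutWeight w C B := by
  rw [cutWeight, cutWeight, cutWeight, ← Finset.sum_add_distrib]
  exact Finset.sum_congr rfl fun u _ => Finset.sum_union h

lemma uncut_expand (hsym : ∀ u v, w u v = w v u)
    {L R Lt Rt U : Finset (Fin n)}
    (hLR : Disjoint L R) (hU : L ∪ R = Uᶜ)
    (hLtU : Lt ⊆ U) (hRtU : Rt ⊆ U) (hd : Disjoint Lt Rt) :
    uncut w (L ∪ Lt) (R ∪ Rt) = uncut w L R + cutWeight w L Lt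
      + (1/2) * cutWeight w Lt Lt + cutWeight w R Rt + (1/2) * cutWeight w Rt Rt
      + cutWeight w (Lt ∪ Rt) (U \ (Lt ∪ Rt)) - cutWeight w Uᶜ (Lt ∪ Rt) := by
  have hUc : ∀ X ⊆ Uᶜ, ∀ Y ⊆ U, Disjoint X Y := fun X hX Y hY =>
    Finset.disjoint_left.2 fun a haX haY => (Finset.mem_compl.1 (hX haX)) (hY haY)
  have hLU : L ⊆ Uᶜ := hU ▸ Finset.subset_union_left
  have hRU : R ⊆ Uᶜ := hU ▸ Finset.subset_union_right
  have hdLLt : Disjoint L Lt := hUc L hLU Lt hLtU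
  have hdRRt : Disjoint R Rt := hUc R hRU Rt hRtU
  have hS : Lt ∪ Rt ⊆ U := Finset.union_subset hLtU hRtU
  have hdUS : Disjoint Uᶜ (Lt ∪ Rt) := hUc Uᶜ (le_refl _) _ hS
  set S := Lt ∪ Rt with hSdef
  have hunion : L ∪ Lt ∪ (R ∪ Rt) = Uᶜ ∪ S := by
    ext x
    simp only [Finset.mem_union, ← hU, hSdef]
    tauto
  have hcompl : (Uᶜ ∪ S)ᶜ = U \ S := by
    ext x
    simp only [Finset.mem_compl, Finset.mem_union, Finset.mem_sdiff]
    tauto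
  have hUsplit : S ∪ (U \ S) = U := Finset.union_sdiff_of_subset hS
  have e1 : cutWeight w (L ∪ Lt) (L ∪ Lt)
      = cutWeight w L L + 2 * cutWeight w L Lt + cutWeight w Lt Lt := by
    rw [cw_union_left hdLLt, cw_union_right hdLLt, cw_union_right hdLLt,
      cw_comm hsym Lt L]
    ring
  have e2 : cutWeight w (R ∪ Rt) (R ∪ Rt)
      = cutWeight w R R + 2 * cutWeight w R Rt + cutWeight w Rt Rt := by
    rw [cw_union_left hdRRt, cw_union_right hdRRt, cw_union_right hdRRt,
      cw_comm hsym Rt R]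
    ring
  have e3 : cutWeight w (L ∪ Lt ∪ (R ∪ Rt)) (L ∪ Lt ∪ (R ∪ Rt))ᶜ
      = cutWeight w Uᶜ (U \ S) + cutWeight w S (U \ S) := by
    rw [hunion, hcompl, cw_union_left hdUS]
  have e4 : cutWeight w (L ∪ R) (L ∪ R)ᶜ
      = cutWeight w Uᶜ S + cutWeight w Uᶜ (U \ S) := by
    have h := cw_union_right (w := w) (Finset.disjoint_sdiff (s := S) (t := U)) Uᶜ
    rw [hUsplit] at h
    rw [hU, compl_compl, h]
  rw [uncut, uncut, e1, e2, e3, e4]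
  ring

lemma uncut_LR (hsym : ∀ u v, w u v = w v u)
    {L R U : Finset (Fin n)} (hU : L ∪ R = Uᶜ) :
    uncut w L R = (1/2) * cutWeight w L L + (1/2) * cutWeight w R R
      + cutWeight w Uᶜ U := by
  rw [uncut, hU, compl_compl]



end Helpers2

section Helpers3



lemma keyReal (a b : ℝ) :
    (max (min (-a) (-b)) 0) ^ 2 + (max (min a b) 0) ^ 2 + a ^ 2 + b ^ 2
      - 2 * (min |a| |b|) ^ 2 ≤ |a + b| * (|a| + |b|) := by
  rcases le_total 0 a with ha | ha <;> rcases le_total 0 b with hb | hb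
  · rcases le_total a b with hab | hab
    · simp only [abs_of_nonneg ha, abs_of_nonneg hb,
        abs_of_nonneg (show (0:ℝ) ≤ a + b by linarith), min_eq_left hab,
        min_eq_right (neg_le_neg hab), max_eq_right (show -b ≤ (0:ℝ) by linarith),
        max_eq_left ha]
      nlinarith
    · simp only [abs_of_nonneg ha, abs_of_nonneg hb,
        abs_of_nonneg (show (0:ℝ) ≤ a + b by linarith), min_eq_right hab,
        min_eq_left (neg_le_neg hab), max_eq_right (show -a ≤ (0:ℝ) by linarith),
        max_eq_left hb]
      nlinarith
  · rcases le_total 0 (a + b) with hs | hs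
    · simp only [abs_of_nonneg ha, abs_of_nonpos hb, abs_of_nonneg hs,
        min_eq_right (show b ≤ a by linarith), min_eq_right (show -b ≤ a by linarith),
        min_eq_left (show -a ≤ -b by linarith),
        max_eq_right (show -a ≤ (0:ℝ) by linarith),
        max_eq_right (show b ≤ (0:ℝ) by linarith)]
      nlinarith
    · simp only [abs_of_nonneg ha, abs_of_nonpos hb, abs_of_nonpos hs,
        min_eq_right (show b ≤ a by linarith), min_eq_left (show a ≤ -b by linarith),
        min_eq_left (show -a ≤ -b by linarith),
        max_eq_right (show -a ≤ (0:ℝ) by linarith),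
        max_eq_right (show b ≤ (0:ℝ) by linarith)]
      nlinarith
  · rcases le_total 0 (a + b) with hs | hs
    · simp only [abs_of_nonpos ha, abs_of_nonneg hb, abs_of_nonneg hs,
        min_eq_left (show a ≤ b by linarith), min_eq_left (show -a ≤ b by linarith),
        min_eq_right (show -b ≤ -a by linarith),
        max_eq_right (show -b ≤ (0:ℝ) by linarith),
        max_eq_right (show a ≤ (0:ℝ) by linarith)]
      nlinarith
    · simp only [abs_of_nonpos ha, abs_of_nonneg hb, abs_of_nonpos hs,
        min_eq_left (show a ≤ b by linarith), min_eq_right (show b ≤ -a by linarith),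
        min_eq_right (show -b ≤ -a by linarith),
        max_eq_right (show -b ≤ (0:ℝ) by linarith),
        max_eq_right (show a ≤ (0:ℝ) by linarith)]
      nlinarith
  · rcases le_total a b with hab | hab
    · simp only [abs_of_nonpos ha, abs_of_nonpos hb,
        abs_of_nonpos (show a + b ≤ (0:ℝ) by linarith), min_eq_left hab,
        min_eq_right (neg_le_neg hab), max_eq_left (show (0:ℝ) ≤ -b by linarith),
        max_eq_right (show a ≤ (0:ℝ) from ha)]
      nlinarith
    · simp only [abs_of_nonpos ha, abs_of_nonpos hb,
        abs_of_nonpos (show a + b ≤ (0:ℝ) by linarith), min_eq_right hab,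
        min_eq_left (neg_le_neg hab), max_eq_left (show (0:ℝ) ≤ -a by linarith),
        max_eq_right (show b ≤ (0:ℝ) from hb)]
      nlinarith

lemma finalAlg (A B Cv : ℝ) (hA : 0 ≤ A) (hB : 0 < B) (hC : 0 ≤ Cv)
    (hA2 : A ≤ 2 * B) (hC2 : Cv ^ 2 ≤ 8 * A * B) :
    (A + Cv) / (B + Cv) ≤ Real.sqrt (72 * (A / B)) := by
  have h1 : (A + Cv) / (B + Cv) ≤ (A + Cv) / B :=
    div_le_div_of_nonneg_left (by linarith) hB (by linarith)
  refine le_trans h1 ?_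
  have hkey : (A + Cv) ^ 2 ≤ 72 * A * B := by
    nlinarith [sq_nonneg (A - Cv), mul_le_mul_of_nonneg_left hA2 hA]
  rw [show (72 * (A / B)) = (72 * A * B) / B ^ 2 by field_simp]
  rw [Real.le_sqrt (by positivity) (div_nonneg (by nlinarith) (by positivity))]
  rw [div_pow, div_le_div_iff₀ (by positivity) (by positivity)]
  nlinarith [sq_nonneg B]


noncomputable def val (a b : ℝ) : ℝ :=
  max (min (-a) (-b)) 0 ^ 2 + max (min a b) 0 ^ 2 + 2 * (|a| ^ 2 - min |a| |b| ^ 2)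

lemma val_add (a b : ℝ) : val a b + val b a ≤ 2 * (|a + b| * (|a| + |b|)) := by
  have h := keyReal a b
  have h1 := sq_abs a
  have h2 := sq_abs b
  rw [val, val, min_comm (-b) (-a), min_comm b a, min_comm |b| |a|]
  linarith

end Helpers3

set_option maxHeartbeats 2000000 in
/-- If every nonempty threshold cut of `f` strictly increases
the uncutness when merged with `(L,R)` (in either orientation), then
`√(72·R⁺_H(f)) ≥ R⁺_G(f)` for the induced subgraph `H` on `U`. -/
theorem maxcut_enlargement
    (hn : 2 ≤ n) (w : Fin n → Fin n → ℝ)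
    (hsym : ∀ u v, w u v = w v u) (hnn : ∀ u v, 0 ≤ w u v)
    (hloop : ∀ v, w v v = 0) (hdeg : ∀ v, 1 ≤ deg w v)
    (U : Finset (Fin n)) (f : Fin n → ℝ) (hf0 : f ≠ 0)
    (hfU : ∀ v, v ∉ U → f v = 0)
    (hpos : 0 < normWsq (inducedW w U) f)
    (L R : Finset (Fin n)) (hLR : Disjoint L R) (hUnion : L ∪ R = Uᶜ)
    (hcut : ∀ t : ℝ, 0 < t → (Lset f t ∪ Rset f t).Nonempty →
      uncut w L R < uncut w (L ∪ Lset f t) (R ∪ Rset f t) ∧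
      uncut w L R < uncut w (L ∪ Rset f t) (R ∪ Lset f t)) :
    rayleighP w f ≤ Real.sqrt (72 * rayleighP (inducedW w U) f) := by
  classical
  set iW := inducedW w U with hiWdef
  have hiWsym : ∀ u v, iW u v = iW v u := by
    intro u v
    rw [hiWdef]
    unfold inducedW
    by_cases hu : u ∈ U <;> by_cases hv : v ∈ U <;> simp [hu, hv, hsym u v]
  have hiWnn : ∀ u v, 0 ≤ iW u v := by
    intro u v; rw [hiWdef]; unfold inducedW; split_ifs; exacts [hnn u v, le_refl 0]
  have hiWw : ∀ u v, u ∈ U → v ∈ U → iW u v = w u v := by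
    intro u v hu hv; rw [hiWdef]; unfold inducedW; rw [if_pos ⟨hu, hv⟩]
  have hiW0 : ∀ u v, u ∉ U ∨ v ∉ U → iW u v = 0 := by
    intro u v h; rw [hiWdef]; unfold inducedW; rw [if_neg (by tauto)]
  have hfU' : ∀ v, f v ≠ 0 → v ∈ U := by
    intro v hv; by_contra h; exact hv (hfU v h)
  set A := signEnergy iW f with hA
  set B := normWsq iW f with hB
  set Cv := ∑ u ∈ Uᶜ, ∑ v, w u v * f v ^ 2 with hCv
  set T : Finset ℝ := insert 0 (Finset.univ.image fun v => |f v|) with hT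
  have h0T : (0:ℝ) ∈ T := Finset.mem_insert_self _ _
  have habsT : ∀ v, |f v| ∈ T := fun v =>
    Finset.mem_insert_of_mem (Finset.mem_image_of_mem _ (Finset.mem_univ v))
  have hminT : ∀ u v : Fin n, min |f u| |f v| ∈ T := fun u v => by
    rcases min_cases |f u| |f v| with ⟨h, _⟩ | ⟨h, _⟩ <;> rw [h] <;> exact habsT _
  set D := ∑ u, ∑ v, iW u v * (|f u + f v| * (|f u| + |f v|)) with hD
  -- threshold sets as filters
  have hSet : ∀ s : ℝ, Lset f s ∪ Rset f s = Finset.univ.filter (fun v => s ≤ |f v|) := by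
    intro s
    rw [Lset, Rset, ← Finset.filter_or]
    apply Finset.filter_congr
    intro v _
    rw [le_abs]
    constructor
    · rintro (h | h)
      · exact Or.inr (by linarith)
      · exact Or.inl h
    · rintro (h | h)
      · exact Or.inr h
      · exact Or.inl (by linarith)
  -- pointwise inequality from hcut
  have hP : ∀ s : ℝ, 0 < s →
      cutWeight w Uᶜ (Lset f s ∪ Rset f s) ≤
        cutWeight w (Lset f s) (Lset f s) + cutWeight w (Rset f s) (Rset f s)
          + 2 * cutWeight w (Lset f s ∪ Rset f s) (U \ (Lset f s ∪ Rset f s)) := by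
    intro s hs
    have hLtU : Lset f s ⊆ U := by
      intro v hv
      rw [Lset, Finset.mem_filter] at hv
      refine hfU' v fun h0 => ?_
      rw [h0] at hv
      linarith [hv.2]
    have hRtU : Rset f s ⊆ U := by
      intro v hv
      rw [Rset, Finset.mem_filter] at hv
      refine hfU' v fun h0 => ?_
      rw [h0] at hv
      linarith [hv.2]
    have hdLtRt : Disjoint (Lset f s) (Rset f s) := by
      rw [Finset.disjoint_left]
      intro v hv1 hv2
      rw [Lset, Finset.mem_filter] at hv1
      rw [Rset, Finset.mem_filter] at hv2
      linarith [hv1.2, hv2.2]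
    by_cases hSne : (Lset f s ∪ Rset f s).Nonempty
    · obtain ⟨h1, h2⟩ := hcut s hs hSne
      rw [uncut_expand hsym hLR hUnion hLtU hRtU hdLtRt] at h1
      rw [uncut_expand hsym hLR hUnion hRtU hLtU hdLtRt.symm] at h2
      rw [Finset.union_comm (Rset f s) (Lset f s)] at h2
      have e1 : cutWeight w Uᶜ (Lset f s) = cutWeight w L (Lset f s) + cutWeight w R (Lset f s) := by
        rw [← hUnion, cw_union_left hLR]
      have e2 : cutWeight w Uᶜ (Rset f s) = cutWeight w L (Rset f s) + cutWeight w R (Rset f s) := by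
        rw [← hUnion, cw_union_left hLR]
      have e3 : cutWeight w Uᶜ (Lset f s ∪ Rset f s)
          = cutWeight w Uᶜ (Lset f s) + cutWeight w Uᶜ (Rset f s) :=
        cw_union_right hdLtRt _
      linarith
    · rw [Finset.not_nonempty_iff_eq_empty] at hSne
      obtain ⟨h1, h2⟩ := Finset.union_eq_empty.1 hSne
      rw [h1, h2]
      simp [cutWeight]
  -- LHS mu-sum evaluates to Cv
  have hmuL : ∑ s ∈ T.filter (fun s => 0 < s),
      mu T s * cutWeight w Uᶜ (Lset f s ∪ Rset f s) = Cv := by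
    have e1 : ∀ s : ℝ, cutWeight w Uᶜ (Lset f s ∪ Rset f s)
        = ∑ u ∈ Uᶜ, ∑ v, (if s ≤ |f v| then w u v else 0) := by
      intro s
      rw [cutWeight, hSet s]
      exact Finset.sum_congr rfl fun u _ => Finset.sum_filter _ _
    calc ∑ s ∈ T.filter (fun s => 0 < s), mu T s * cutWeight w Uᶜ (Lset f s ∪ Rset f s)
        = ∑ s ∈ T.filter (fun s => 0 < s), ∑ u ∈ Uᶜ, ∑ v,
            mu T s * (if s ≤ |f v| then w u v else 0) := by
          refine Finset.sum_congr rfl fun s _ => ?_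
          rw [e1 s, Finset.mul_sum]
          exact Finset.sum_congr rfl fun u _ => Finset.mul_sum _ _ _
      _ = ∑ u ∈ Uᶜ, ∑ v, ∑ s ∈ T.filter (fun s => 0 < s),
            mu T s * (if s ≤ |f v| then w u v else 0) := by
          rw [Finset.sum_comm]
          exact Finset.sum_congr rfl fun u _ => Finset.sum_comm
      _ = Cv := by
          rw [hCv]
          refine Finset.sum_congr rfl fun u _ => Finset.sum_congr rfl fun v _ => ?_
          have e2 : ∀ s : ℝ, mu T s * (if s ≤ |f v| then w u v else 0)
              = w u v * (mu T s * (if s ≤ |f v| then 1 else 0)) := fun s => by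
            split_ifs <;> ring
          rw [Finset.sum_congr rfl fun s _ => e2 s, ← Finset.mul_sum,
            ind_sum T h0T |f v| (fun _ => habsT v), max_eq_left (abs_nonneg _), sq_abs]
  -- RHS components as indicator sums
  have e3 : ∀ s : ℝ, 0 < s → cutWeight w (Lset f s) (Lset f s)
      = ∑ u, ∑ v, iW u v * (if s ≤ min (-f u) (-f v) then 1 else 0) := by
    intro s hs
    have step : cutWeight w (Lset f s) (Lset f s)
        = ∑ u, ∑ v, (if f u ≤ -s ∧ f v ≤ -s then w u v else 0) := by
      rw [cutWeight, Lset, Finset.sum_filter]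
      refine Finset.sum_congr rfl fun u _ => ?_
      split_ifs with hu
      · rw [Finset.sum_filter]
        exact Finset.sum_congr rfl fun v _ => by simp only [hu, true_and]
      · symm
        apply Finset.sum_eq_zero
        intro v _
        rw [if_neg fun hc => hu hc.1]
    rw [step]
    refine Finset.sum_congr rfl fun u _ => Finset.sum_congr rfl fun v _ => ?_
    by_cases h1 : f u ≤ -s <;> by_cases h2 : f v ≤ -s
    · have hu : u ∈ U := hfU' u fun h0 => by rw [h0] at h1; linarith
      have hv : v ∈ U := hfU' v fun h0 => by rw [h0] at h2; linarith
      rw [if_pos ⟨h1, h2⟩, if_pos (le_min (by linarith) (by linarith)), hiWw u v hu hv]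
      ring
    · rw [if_neg fun hc => h2 hc.2, if_neg fun hc => h2 (by
        have := le_trans hc (min_le_right (-f u) (-f v)); linarith)]
      ring
    · rw [if_neg fun hc => h1 hc.1, if_neg fun hc => h1 (by
        have := le_trans hc (min_le_left (-f u) (-f v)); linarith)]
      ring
    · rw [if_neg fun hc => h1 hc.1, if_neg fun hc => h1 (by
        have := le_trans hc (min_le_left (-f u) (-f v)); linarith)]
      ring
  have e4 : ∀ s : ℝ, 0 < s → cutWeight w (Rset f s) (Rset f s)
      = ∑ u, ∑ v, iW u v * (if s ≤ min (f u) (f v) then 1 else 0) := by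
    intro s hs
    have step : cutWeight w (Rset f s) (Rset f s)
        = ∑ u, ∑ v, (if s ≤ f u ∧ s ≤ f v then w u v else 0) := by
      rw [cutWeight, Rset, Finset.sum_filter]
      refine Finset.sum_congr rfl fun u _ => ?_
      split_ifs with hu
      · rw [Finset.sum_filter]
        exact Finset.sum_congr rfl fun v _ => by simp only [hu, true_and]
      · symm
        apply Finset.sum_eq_zero
        intro v _
        rw [if_neg fun hc => hu hc.1]
    rw [step]
    refine Finset.sum_congr rfl fun u _ => Finset.sum_congr rfl fun v _ => ?_
    by_cases h1 : s ≤ f u <;> by_cases h2 : s ≤ f v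
    · have hu : u ∈ U := hfU' u fun h0 => by rw [h0] at h1; linarith
      have hv : v ∈ U := hfU' v fun h0 => by rw [h0] at h2; linarith
      rw [if_pos ⟨h1, h2⟩, if_pos (le_min h1 h2), hiWw u v hu hv]
      ring
    · rw [if_neg fun hc => h2 hc.2, if_neg fun hc => h2 (le_trans hc (min_le_right _ _))]
      ring
    · rw [if_neg fun hc => h1 hc.1, if_neg fun hc => h1 (le_trans hc (min_le_left _ _))]
      ring
    · rw [if_neg fun hc => h1 hc.1, if_neg fun hc => h1 (le_trans hc (min_le_left _ _))]
      ring
  have e5 : ∀ s : ℝ, 0 < s → cutWeight w (Lset f s ∪ Rset f s) (U \ (Lset f s ∪ Rset f s))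
      = ∑ u, ∑ v, iW u v * ((if s ≤ |f u| then 1 else 0) * (if s ≤ |f v| then 0 else 1)) := by
    intro s hs
    have hsd : U \ (Lset f s ∪ Rset f s)
        = Finset.univ.filter (fun v => v ∈ U ∧ ¬ s ≤ |f v|) := by
      ext v
      simp only [Finset.mem_sdiff, hSet s, Finset.mem_filter, Finset.mem_univ, true_and]
    have step : cutWeight w (Lset f s ∪ Rset f s) (U \ (Lset f s ∪ Rset f s))
        = ∑ u, ∑ v, (if s ≤ |f u| ∧ (v ∈ U ∧ ¬ s ≤ |f v|) then w u v else 0) := by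
      rw [cutWeight, hsd, hSet s, Finset.sum_filter]
      refine Finset.sum_congr rfl fun u _ => ?_
      split_ifs with hu
      · rw [Finset.sum_filter]
        exact Finset.sum_congr rfl fun v _ => by simp only [hu, true_and]
      · symm
        apply Finset.sum_eq_zero
        intro v _
        rw [if_neg fun hc => hu hc.1]
    rw [step]
    refine Finset.sum_congr rfl fun u _ => Finset.sum_congr rfl fun v _ => ?_
    by_cases h1 : s ≤ |f u|
    · have hu : u ∈ U := hfU' u fun h0 => by rw [h0] at h1; simp at h1; linarith
      by_cases h2 : v ∈ U
      · by_cases h3 : s ≤ |f v|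
        · rw [if_neg fun hc => hc.2.2 h3, if_pos h1, if_pos h3]
          ring
        · rw [if_pos ⟨h1, h2, h3⟩, if_pos h1, if_neg h3, hiWw u v hu h2]
          ring
      · have hfv : f v = 0 := hfU v h2
        rw [if_neg fun hc => h2 hc.2.1, hiW0 u v (Or.inr h2)]
        ring
    · rw [if_neg fun hc => h1 hc.1, if_neg h1]
      ring
  -- RHS mu-sums evaluate per part
  have hmuR1 : ∑ s ∈ T.filter (fun s => 0 < s),
      mu T s * cutWeight w (Lset f s) (Lset f s)
      = ∑ u, ∑ v, iW u v * (max (min (-f u) (-f v)) 0) ^ 2 := by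
    calc ∑ s ∈ T.filter (fun s => 0 < s), mu T s * cutWeight w (Lset f s) (Lset f s)
        = ∑ s ∈ T.filter (fun s => 0 < s), ∑ u, ∑ v,
            mu T s * (iW u v * (if s ≤ min (-f u) (-f v) then 1 else 0)) := by
          refine Finset.sum_congr rfl fun s hsmem => ?_
          rw [e3 s (Finset.mem_filter.1 hsmem).2, Finset.mul_sum]
          exact Finset.sum_congr rfl fun u _ => Finset.mul_sum _ _ _
      _ = ∑ u, ∑ v, ∑ s ∈ T.filter (fun s => 0 < s),
            mu T s * (iW u v * (if s ≤ min (-f u) (-f v) then 1 else 0)) := by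
          rw [Finset.sum_comm]
          exact Finset.sum_congr rfl fun u _ => Finset.sum_comm
      _ = ∑ u, ∑ v, iW u v * (max (min (-f u) (-f v)) 0) ^ 2 := by
          refine Finset.sum_congr rfl fun u _ => Finset.sum_congr rfl fun v _ => ?_
          have e : ∀ s : ℝ, mu T s * (iW u v * (if s ≤ min (-f u) (-f v) then 1 else 0))
              = iW u v * (mu T s * (if s ≤ min (-f u) (-f v) then 1 else 0)) :=
            fun s => by ring
          rw [Finset.sum_congr rfl fun s _ => e s, ← Finset.mul_sum]
          congr 1
          apply ind_sum T h0T
          intro hmin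
          have hu : f u ≤ 0 := by
            have := le_trans hmin (min_le_left (-f u) (-f v)); linarith
          have hv : f v ≤ 0 := by
            have := le_trans hmin (min_le_right (-f u) (-f v)); linarith
          rw [show min (-f u) (-f v) = min |f u| |f v| by
            rw [abs_of_nonpos hu, abs_of_nonpos hv]]
          exact hminT u v
  have hmuR2 : ∑ s ∈ T.filter (fun s => 0 < s),
      mu T s * cutWeight w (Rset f s) (Rset f s)
      = ∑ u, ∑ v, iW u v * (max (min (f u) (f v)) 0) ^ 2 := by
    calc ∑ s ∈ T.filter (fun s => 0 < s), mu T s * cutWeight w (Rset f s) (Rset f s)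
        = ∑ s ∈ T.filter (fun s => 0 < s), ∑ u, ∑ v,
            mu T s * (iW u v * (if s ≤ min (f u) (f v) then 1 else 0)) := by
          refine Finset.sum_congr rfl fun s hsmem => ?_
          rw [e4 s (Finset.mem_filter.1 hsmem).2, Finset.mul_sum]
          exact Finset.sum_congr rfl fun u _ => Finset.mul_sum _ _ _
      _ = ∑ u, ∑ v, ∑ s ∈ T.filter (fun s => 0 < s),
            mu T s * (iW u v * (if s ≤ min (f u) (f v) then 1 else 0)) := by
          rw [Finset.sum_comm]
          exact Finset.sum_congr rfl fun u _ => Finset.sum_comm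
      _ = ∑ u, ∑ v, iW u v * (max (min (f u) (f v)) 0) ^ 2 := by
          refine Finset.sum_congr rfl fun u _ => Finset.sum_congr rfl fun v _ => ?_
          have e : ∀ s : ℝ, mu T s * (iW u v * (if s ≤ min (f u) (f v) then 1 else 0))
              = iW u v * (mu T s * (if s ≤ min (f u) (f v) then 1 else 0)) :=
            fun s => by ring
          rw [Finset.sum_congr rfl fun s _ => e s, ← Finset.mul_sum]
          congr 1
          apply ind_sum T h0T
          intro hmin
          have hu : 0 ≤ f u := le_trans hmin (min_le_left _ _)
          have hv : 0 ≤ f v := le_trans hmin (min_le_right _ _)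
          rw [show min (f u) (f v) = min |f u| |f v| by
            rw [abs_of_nonneg hu, abs_of_nonneg hv]]
          exact hminT u v
  have hmuR3 : ∑ s ∈ T.filter (fun s => 0 < s),
      mu T s * cutWeight w (Lset f s ∪ Rset f s) (U \ (Lset f s ∪ Rset f s))
      = ∑ u, ∑ v, iW u v * (|f u| ^ 2 - (min |f u| |f v|) ^ 2) := by
    calc ∑ s ∈ T.filter (fun s => 0 < s),
        mu T s * cutWeight w (Lset f s ∪ Rset f s) (U \ (Lset f s ∪ Rset f s))
        = ∑ s ∈ T.filter (fun s => 0 < s), ∑ u, ∑ v,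
            mu T s * (iW u v * ((if s ≤ |f u| then 1 else 0) * (if s ≤ |f v| then 0 else 1))) := by
          refine Finset.sum_congr rfl fun s hsmem => ?_
          rw [e5 s (Finset.mem_filter.1 hsmem).2, Finset.mul_sum]
          exact Finset.sum_congr rfl fun u _ => Finset.mul_sum _ _ _
      _ = ∑ u, ∑ v, ∑ s ∈ T.filter (fun s => 0 < s),
            mu T s * (iW u v * ((if s ≤ |f u| then 1 else 0) * (if s ≤ |f v| then 0 else 1))) := by
          rw [Finset.sum_comm]
          exact Finset.sum_congr rfl fun u _ => Finset.sum_comm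
      _ = ∑ u, ∑ v, iW u v * (|f u| ^ 2 - (min |f u| |f v|) ^ 2) := by
          refine Finset.sum_congr rfl fun u _ => Finset.sum_congr rfl fun v _ => ?_
          have e : ∀ s : ℝ, mu T s * (iW u v *
                ((if s ≤ |f u| then 1 else 0) * (if s ≤ |f v| then 0 else 1)))
              = iW u v * (mu T s *
                ((if s ≤ |f u| then 1 else 0) * (if s ≤ |f v| then 0 else 1))) :=
            fun s => by ring
          rw [Finset.sum_congr rfl fun s _ => e s, ← Finset.mul_sum]
          congr 1
          exact ind_sum2 T h0T (habsT u) (habsT v) (abs_nonneg _) (abs_nonneg _)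
  -- combine: Cv ≤ val-sum
  have hCvval : Cv ≤ ∑ u, ∑ v, iW u v * val (f u) (f v) := by
    have hle : Cv ≤ ∑ s ∈ T.filter (fun s => 0 < s),
        mu T s * (cutWeight w (Lset f s) (Lset f s) + cutWeight w (Rset f s) (Rset f s)
          + 2 * cutWeight w (Lset f s ∪ Rset f s) (U \ (Lset f s ∪ Rset f s))) := by
      rw [← hmuL]
      refine Finset.sum_le_sum fun s hsmem => ?_
      have hs : 0 < s := (Finset.mem_filter.1 hsmem).2
      exact mul_le_mul_of_nonneg_left (hP s hs) (mu_nonneg T h0T hs)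
    refine le_trans hle ?_
    have hsplit : ∑ s ∈ T.filter (fun s => 0 < s),
        mu T s * (cutWeight w (Lset f s) (Lset f s) + cutWeight w (Rset f s) (Rset f s)
          + 2 * cutWeight w (Lset f s ∪ Rset f s) (U \ (Lset f s ∪ Rset f s)))
        = (∑ s ∈ T.filter (fun s => 0 < s), mu T s * cutWeight w (Lset f s) (Lset f s))
          + (∑ s ∈ T.filter (fun s => 0 < s), mu T s * cutWeight w (Rset f s) (Rset f s))
          + 2 * ∑ s ∈ T.filter (fun s => 0 < s),
              mu T s * cutWeight w (Lset f s ∪ Rset f s) (U \ (Lset f s ∪ Rset f s)) := by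
      rw [Finset.mul_sum, ← Finset.sum_add_distrib, ← Finset.sum_add_distrib]
      exact Finset.sum_congr rfl fun s _ => by ring
    have hvalsplit : ∑ u, ∑ v, iW u v * val (f u) (f v)
        = (∑ u, ∑ v, iW u v * (max (min (-f u) (-f v)) 0) ^ 2)
          + (∑ u, ∑ v, iW u v * (max (min (f u) (f v)) 0) ^ 2)
          + 2 * ∑ u, ∑ v, iW u v * (|f u| ^ 2 - (min |f u| |f v|) ^ 2) := by
      rw [Finset.mul_sum, ← Finset.sum_add_distrib, ← Finset.sum_add_distrib]
      refine Finset.sum_congr rfl fun u _ => ?_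
      rw [Finset.mul_sum, ← Finset.sum_add_distrib, ← Finset.sum_add_distrib]
      refine Finset.sum_congr rfl fun v _ => ?_
      rw [val]
      ring
    rw [hsplit, hvalsplit, hmuR1, hmuR2, hmuR3]
  -- val-sum ≤ D
  have hflip : ∑ u, ∑ v, iW u v * val (f u) (f v)
      = ∑ u, ∑ v, iW u v * val (f v) (f u) := by
    rw [Finset.sum_comm]
    exact Finset.sum_congr rfl fun x _ => Finset.sum_congr rfl fun y _ => by
      rw [hiWsym]
  have hvalD : ∑ u, ∑ v, iW u v * val (f u) (f v) ≤ D := by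
    have hsum : (∑ u, ∑ v, iW u v * val (f u) (f v))
        + (∑ u, ∑ v, iW u v * val (f v) (f u)) ≤ 2 * D := by
      rw [← Finset.sum_add_distrib]
      have h1 : ∀ u : Fin n, (∑ v, iW u v * val (f u) (f v)) + ∑ v, iW u v * val (f v) (f u)
          = ∑ v, (iW u v * val (f u) (f v) + iW u v * val (f v) (f u)) := fun u =>
        (Finset.sum_add_distrib).symm
      rw [Finset.sum_congr rfl fun u _ => h1 u]
      have h2 : 2 * D = ∑ u, ∑ v, 2 * (iW u v * (|f u + f v| * (|f u| + |f v|))) := by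
        rw [hD, Finset.mul_sum]
        exact Finset.sum_congr rfl fun u _ => Finset.mul_sum _ _ _
      rw [h2]
      refine Finset.sum_le_sum fun u _ => Finset.sum_le_sum fun v _ => ?_
      rw [← mul_add]
      calc iW u v * (val (f u) (f v) + val (f v) (f u))
          ≤ iW u v * (2 * (|f u + f v| * (|f u| + |f v|))) :=
            mul_le_mul_of_nonneg_left (val_add _ _) (hiWnn u v)
        _ = 2 * (iW u v * (|f u + f v| * (|f u| + |f v|))) := by ring
    rw [← hflip] at hsum
    linarith
  have hCvD : Cv ≤ D := le_trans hCvval hvalD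
  have hCv0 : 0 ≤ Cv := by
    rw [hCv]
    refine Finset.sum_nonneg fun u _ => Finset.sum_nonneg fun v _ =>
      mul_nonneg (hnn u v) (sq_nonneg _)
  -- Cauchy-Schwarz
  have h2A : ∑ u, ∑ v, iW u v * (f u + f v) ^ 2 = 2 * A := by
    rw [hA, signEnergy]
    ring
  have hBu : ∑ u, ∑ v, iW u v * f u ^ 2 = B := by
    rw [hB, normWsq]
    refine Finset.sum_congr rfl fun u _ => ?_
    rw [deg, Finset.sum_mul]
  have hBv : ∑ u, ∑ v, iW u v * f v ^ 2 = B := by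
    rw [Finset.sum_comm]
    have e : (∑ v : Fin n, ∑ u : Fin n, iW u v * f v ^ 2)
        = ∑ x, ∑ y, iW x y * f x ^ 2 :=
      Finset.sum_congr rfl fun x _ => Finset.sum_congr rfl fun y _ => by
        rw [hiWsym y x]
    rw [e]
    exact hBu
  have h4B : ∑ u, ∑ v, iW u v * (|f u| + |f v|) ^ 2 ≤ 4 * B := by
    have step : ∑ u, ∑ v, iW u v * (|f u| + |f v|) ^ 2
        ≤ ∑ u, ∑ v, (2 * (iW u v * f u ^ 2) + 2 * (iW u v * f v ^ 2)) := by
      refine Finset.sum_le_sum fun u _ => Finset.sum_le_sum fun v _ => ?_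
      have h := mul_le_mul_of_nonneg_left
        (show (|f u| + |f v|) ^ 2 ≤ 2 * f u ^ 2 + 2 * f v ^ 2 by
          nlinarith [sq_abs (f u), sq_abs (f v), sq_nonneg (|f u| - |f v|)])
        (hiWnn u v)
      nlinarith [h]
    refine le_trans step ?_
    have expand : ∑ u, ∑ v, (2 * (iW u v * f u ^ 2) + 2 * (iW u v * f v ^ 2))
        = 2 * (∑ u, ∑ v, iW u v * f u ^ 2) + 2 * (∑ u, ∑ v, iW u v * f v ^ 2) := by
      rw [Finset.mul_sum, Finset.mul_sum, ← Finset.sum_add_distrib]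
      refine Finset.sum_congr rfl fun u _ => ?_
      rw [Finset.mul_sum, Finset.mul_sum, ← Finset.sum_add_distrib]
    rw [expand, hBu, hBv]
    linarith
  have hA0 : 0 ≤ A := by
    rw [hA, signEnergy]
    refine mul_nonneg (by norm_num) (Finset.sum_nonneg fun u _ =>
      Finset.sum_nonneg fun v _ => mul_nonneg (hiWnn u v) (sq_nonneg _))
  have hA2B : A ≤ 2 * B := by
    have step : ∑ u, ∑ v, iW u v * (f u + f v) ^ 2
        ≤ ∑ u, ∑ v, iW u v * (|f u| + |f v|) ^ 2 := by
      refine Finset.sum_le_sum fun u _ => Finset.sum_le_sum fun v _ => ?_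
      refine mul_le_mul_of_nonneg_left ?_ (hiWnn u v)
      have h1 : |f u + f v| ≤ |f u| + |f v| := abs_add_le _ _
      nlinarith [sq_abs (f u + f v), abs_nonneg (f u + f v)]
    rw [h2A] at step
    linarith [le_trans step h4B]
  have hDsq : D ^ 2 ≤ 8 * A * B := by
    have hrw : D = ∑ p : Fin n × Fin n,
        (fun p : Fin n × Fin n => Real.sqrt (iW p.1 p.2) * |f p.1 + f p.2|) p
          * (fun p : Fin n × Fin n => Real.sqrt (iW p.1 p.2) * (|f p.1| + |f p.2|)) p := by
      rw [hD, Fintype.sum_prod_type]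
      refine Finset.sum_congr rfl fun u _ => Finset.sum_congr rfl fun v _ => ?_
      show iW u v * (|f u + f v| * (|f u| + |f v|))
          = (Real.sqrt (iW u v) * |f u + f v|) * (Real.sqrt (iW u v) * (|f u| + |f v|))
      rw [show (Real.sqrt (iW u v) * |f u + f v|) * (Real.sqrt (iW u v) * (|f u| + |f v|))
          = (Real.sqrt (iW u v) * Real.sqrt (iW u v)) * (|f u + f v| * (|f u| + |f v|))
        from by ring, Real.mul_self_sqrt (hiWnn u v)]
    have hF : ∑ p : Fin n × Fin n, (Real.sqrt (iW p.1 p.2) * |f p.1 + f p.2|) ^ 2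
        = 2 * A := by
      rw [Fintype.sum_prod_type]
      have e : (∑ u : Fin n, ∑ v : Fin n, (Real.sqrt (iW u v) * |f u + f v|) ^ 2)
          = ∑ u, ∑ v, iW u v * (f u + f v) ^ 2 :=
        Finset.sum_congr rfl fun u _ => Finset.sum_congr rfl fun v _ => by
          rw [mul_pow, Real.sq_sqrt (hiWnn u v), sq_abs]
      rw [e]
      exact h2A
    have hG : ∑ p : Fin n × Fin n, (Real.sqrt (iW p.1 p.2) * (|f p.1| + |f p.2|)) ^ 2
        ≤ 4 * B := by
      rw [Fintype.sum_prod_type]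
      have e : (∑ u : Fin n, ∑ v : Fin n, (Real.sqrt (iW u v) * (|f u| + |f v|)) ^ 2)
          = ∑ u, ∑ v, iW u v * (|f u| + |f v|) ^ 2 :=
        Finset.sum_congr rfl fun u _ => Finset.sum_congr rfl fun v _ => by
          rw [mul_pow, Real.sq_sqrt (hiWnn u v)]
      rw [e]
      exact h4B
    have hCS := Finset.sum_mul_sq_le_sq_mul_sq Finset.univ
      (fun p : Fin n × Fin n => Real.sqrt (iW p.1 p.2) * |f p.1 + f p.2|)
      (fun p : Fin n × Fin n => Real.sqrt (iW p.1 p.2) * (|f p.1| + |f p.2|))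
    rw [hrw]
    refine le_trans hCS ?_
    rw [hF]
    have hGnn : 0 ≤ ∑ p : Fin n × Fin n,
        (Real.sqrt (iW p.1 p.2) * (|f p.1| + |f p.2|)) ^ 2 :=
      Finset.sum_nonneg fun p _ => sq_nonneg _
    nlinarith [hG, hA0]
  have hCsq : Cv ^ 2 ≤ 8 * A * B := by
    have h1 : Cv ^ 2 ≤ D ^ 2 := by nlinarith [hCvD, hCv0]
    linarith
  -- energy and norm decompositions
  have hCvv : Cv = ∑ v, (∑ u ∈ Uᶜ, w u v) * f v ^ 2 := by
    rw [hCv, Finset.sum_comm]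
    exact Finset.sum_congr rfl fun v _ => (Finset.sum_mul _ _ _).symm
  have hbd : ∀ v, v ∈ U → ∑ u, (w u v - iW u v) = ∑ u ∈ Uᶜ, w u v := by
    intro v hv
    rw [show (∑ u ∈ Uᶜ, w u v) = ∑ u, (if u ∈ Uᶜ then w u v else 0) from
      ((Finset.sum_ite_mem _ _ _).trans (by rw [Finset.univ_inter])).symm]
    refine Finset.sum_congr rfl fun u _ => ?_
    by_cases hu : u ∈ U
    · rw [hiWw u v hu hv, if_neg (by simp [hu])]
      ring
    · rw [hiW0 u v (Or.inl hu), if_pos (by simp [hu])]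
      ring
  have hnorm : normWsq w f = B + Cv := by
    rw [normWsq, hB, normWsq, hCvv, ← Finset.sum_add_distrib]
    refine Finset.sum_congr rfl fun v _ => ?_
    by_cases hv : f v = 0
    · simp [hv]
    · have hvU : v ∈ U := hfU' v hv
      have hdeg2 : deg w v = deg iW v + ∑ u ∈ Uᶜ, w u v := by
        rw [← hbd v hvU, deg, deg, ← Finset.sum_add_distrib]
        refine Finset.sum_congr rfl fun u _ => ?_
        rw [hsym v u, hiWsym v u]
        ring
      rw [hdeg2]
      ring
  have hsign : signEnergy w f = A + Cv := by
    have key : ∀ u v, w u v * (f u + f v) ^ 2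
        = iW u v * (f u + f v) ^ 2 + ((w u v - iW u v) * f u ^ 2
          + (w u v - iW u v) * f v ^ 2) := by
      intro u v
      by_cases hu : u ∈ U <;> by_cases hv : v ∈ U
      · rw [hiWw u v hu hv]; ring
      · rw [hiW0 u v (Or.inr hv), hfU v hv]; ring
      · rw [hiW0 u v (Or.inl hu), hfU u hu]; ring
      · rw [hiW0 u v (Or.inl hu), hfU u hu, hfU v hv]; ring
    have hY : ∑ u, ∑ v, (w u v - iW u v) * f v ^ 2 = Cv := by
      rw [hCvv, Finset.sum_comm]
      refine Finset.sum_congr rfl fun v _ => ?_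
      rw [← Finset.sum_mul]
      by_cases hv : f v = 0
      · rw [hv]; ring
      · rw [hbd v (hfU' v hv)]
    have hX : ∑ u, ∑ v, (w u v - iW u v) * f u ^ 2 = Cv := by
      rw [Finset.sum_comm]
      have e : (∑ x : Fin n, ∑ y : Fin n, (w y x - iW y x) * f y ^ 2)
          = ∑ x, ∑ y, (w x y - iW x y) * f y ^ 2 :=
        Finset.sum_congr rfl fun x _ => Finset.sum_congr rfl fun y _ => by
          rw [hsym y x, hiWsym y x]
      rw [e]
      exact hY
    have e2 : ∑ u, ∑ v, w u v * (f u + f v) ^ 2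
        = ∑ u, ∑ v, (iW u v * (f u + f v) ^ 2 + ((w u v - iW u v) * f u ^ 2
          + (w u v - iW u v) * f v ^ 2)) :=
      Finset.sum_congr rfl fun u _ => Finset.sum_congr rfl fun v _ => key u v
    rw [signEnergy, e2]
    simp only [Finset.sum_add_distrib]
    rw [hX, hY, h2A]
    ring
  -- conclusion
  have hfinal := finalAlg A B Cv hA0 hpos hCv0 hA2B hCsq
  have hg : rayleighP w f = (A + Cv) / (B + Cv) := by
    rw [rayleighP, hsign, hnorm]
  have hh : rayleighP iW f = A / B := by
    rw [rayleighP, ← hA, ← hB]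
  rw [hg, hh]
  exact hfinal


end

end CheegerHigher
end
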